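/- arXiv:2005.04227 — 8 statements merged into one kernel-verified Lean document; each statement's English description precedes it below -/
import Mathlib

section
/- For every non-negative integer n and every nonzero complex number a, the finite sum ∑_{j=0}^{2n} (-a/2)^(-j) · E(j+1, (a+1)/2) / (j! · (2n-j)!) equals E(2n) / (2 · (2n)! · a^(2n-1)), where E(m,x) denotes the m-th Euler polynomial and E(m) the m-th Euler number. -/
/-- The `n`-th Euler polynomial (as a function `ℂ → ℂ`), defined via Bernoulli
polynomials by `E_n(x) = 2^{n+1}/(n+1) * (B_{n+1}((x+1)/2) - B_{n+1}(x/2))`,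
which is equivalent to the generating function `2 e^{xt}/(e^t+1) = ∑ E_n(x) t^n/n!`. -/
noncomputable def eulerPoly (n : ℕ) (x : ℂ) : ℂ :=
  (2 : ℂ) ^ (n + 1) / (n + 1) *
    (Polynomial.aeval ((x + 1) / 2) (Polynomial.bernoulli (n + 1)) -
     Polynomial.aeval (x / 2) (Polynomial.bernoulli (n + 1)))

/-- The `n`-th Euler number, `E_n = 2^n E_n(1/2)`. -/
noncomputable def eulerNumber (n : ℕ) : ℂ := 2 ^ n * eulerPoly n (1 / 2)

open Polynomial Finset


lemma aeval_bernoulli_eq (m : ℕ) (z : ℂ) :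
    aeval z (Polynomial.bernoulli m) =
      ∑ i ∈ range (m + 1), ((_root_.bernoulli i : ℂ)) * (m.choose i : ℂ) * z ^ (m - i) := by
  rw [Polynomial.bernoulli, map_sum]
  refine Finset.sum_congr rfl fun i hi => ?_
  rw [aeval_monomial, eq_ratCast]
  push_cast
  ring

lemma aeval_bernoulli_add (n : ℕ) (x y : ℂ) :
    aeval (x + y) (Polynomial.bernoulli n) =
      ∑ k ∈ range (n + 1), (n.choose k : ℂ) * aeval x (Polynomial.bernoulli k) * y ^ (n - k) := by
  rw [aeval_bernoulli_eq]
  have lhs : ∀ i ∈ range (n+1),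
      (_root_.bernoulli i : ℂ) * (n.choose i : ℂ) * (x + y) ^ (n - i)
      = ∑ j ∈ range (n - i + 1), (_root_.bernoulli i : ℂ) * (n.choose i : ℂ)
          * ((n-i).choose j : ℂ) * x ^ j * y ^ (n - i - j) := by
    intro i hi
    rw [add_pow, Finset.mul_sum]
    refine Finset.sum_congr rfl fun j hj => ?_
    ring
  rw [Finset.sum_congr rfl lhs]
  have rhs : ∀ k ∈ range (n+1),
      (n.choose k : ℂ) * aeval x (Polynomial.bernoulli k) * y ^ (n - k)
      = ∑ i ∈ range (k+1), (_root_.bernoulli i : ℂ) * (n.choose k : ℂ)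
          * (k.choose i : ℂ) * x ^ (k - i) * y ^ (n - k) := by
    intro k hk
    rw [aeval_bernoulli_eq, Finset.mul_sum, Finset.sum_mul]
    refine Finset.sum_congr rfl fun i hi => ?_
    ring
  rw [Finset.sum_congr rfl rhs, Finset.sum_sigma', Finset.sum_sigma']
  refine Finset.sum_nbij' (fun p => ⟨p.1 + p.2, p.1⟩) (fun p => ⟨p.2, p.1 - p.2⟩) ?_ ?_ ?_ ?_ ?_
  · rintro ⟨i, j⟩ hp
    simp only [Finset.mem_sigma, Finset.mem_range] at hp ⊢
    omega
  · rintro ⟨k, i⟩ hp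
    simp only [Finset.mem_sigma, Finset.mem_range] at hp ⊢
    omega
  · rintro ⟨i, j⟩ hp; simp
  · rintro ⟨k, i⟩ hp
    simp only [Finset.mem_sigma, Finset.mem_range] at hp
    simp only [Sigma.mk.inj_iff]
    constructor
    · omega
    · exact heq_of_eq rfl
  · rintro ⟨i, j⟩ hp
    simp only [Finset.mem_sigma, Finset.mem_range] at hp
    have h1 : i + j ≤ n := by omega
    have h2 : i ≤ i + j := Nat.le_add_right _ _
    have key : (n.choose (i+j) : ℂ) * ((i+j).choose i : ℂ)
        = (n.choose i : ℂ) * ((n - i).choose j : ℂ) := by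
      rw [← Nat.cast_mul, ← Nat.cast_mul, Nat.choose_mul h2, Nat.add_sub_cancel_left]
    simp only []
    rw [Nat.add_sub_cancel_left, Nat.sub_sub]
    calc (_root_.bernoulli i : ℂ) * (n.choose i : ℂ) * ((n-i).choose j : ℂ) * x ^ j * y ^ (n - (i + j))
        = ((n.choose i : ℂ) * ((n - i).choose j : ℂ)) * ((_root_.bernoulli i : ℂ) * x ^ j * y ^ (n - (i+j))) := by ring
      _ = ((n.choose (i+j) : ℂ) * ((i+j).choose i : ℂ)) * ((_root_.bernoulli i : ℂ) * x ^ j * y ^ (n - (i+j))) := by rw [key]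
      _ = _ := by ring

lemma bernoulli_comp_one_sub (n : ℕ) :
    (Polynomial.bernoulli n).comp (1 - X) = (-1 : ℚ[X]) ^ n * Polynomial.bernoulli n := by
  induction n with
  | zero => simp
  | succ n ih =>
    set p : ℚ[X] := (Polynomial.bernoulli (n+1)).comp (1 - X)
        - (-1 : ℚ[X]) ^ (n+1) * Polynomial.bernoulli (n+1) with hp
    have hder : derivative p = 0 := by
      rw [hp, derivative_sub, derivative_comp_one_sub_X, derivative_bernoulli_add_one,
        mul_comp, ih]
      simp only [derivative_mul, derivative_pow, derivative_neg, derivative_one, neg_zero,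
        mul_zero, zero_mul, zero_add, derivative_bernoulli_add_one, natCast_comp, add_comp, one_comp]
      push_cast
      ring
    have hC := eq_C_of_derivative_eq_zero hder
    have heval : p.eval 0 = 0 := by
      rw [hp, eval_sub, eval_comp]
      simp only [eval_sub, eval_one, eval_X, sub_zero, eval_mul, eval_pow, eval_neg,
        Polynomial.bernoulli_eval_one, Polynomial.bernoulli_eval_zero]
      rw [bernoulli'_eq_bernoulli]
      ring
    have hp0 : p = 0 := by rw [hC, Polynomial.coeff_zero_eq_eval_zero, heval, map_zero]
    rw [hp] at hp0
    exact sub_eq_zero.mp hp0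

lemma aeval_bernoulli_one_sub (n : ℕ) (x : ℂ) :
    aeval (1 - x) (Polynomial.bernoulli n) = (-1) ^ n * aeval x (Polynomial.bernoulli n) := by
  have h := congrArg (aeval x (R := ℚ) (A := ℂ)) (bernoulli_comp_one_sub n)
  rw [aeval_comp] at h
  simp only [map_sub, map_one, aeval_X, map_mul, map_pow, map_neg] at h
  simpa using h



lemma eulerPoly_half_odd (k : ℕ) (hk : Odd k) : eulerPoly k (1/2) = 0 := by
  obtain ⟨m, rfl⟩ := hk
  rw [eulerPoly]
  have h1 : ((1:ℂ)/2 + 1)/2 = 3/4 := by norm_num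
  have h2 : ((1:ℂ)/2)/2 = 1/4 := by norm_num
  rw [h1, h2]
  have h3 : (3/4 : ℂ) = 1 - 1/4 := by norm_num
  rw [h3, aeval_bernoulli_one_sub]
  have : 2 * m + 1 + 1 = 2 * (m + 1) := by ring
  rw [this, pow_mul]
  norm_num

lemma bernoulli_diff_eq (j : ℕ) :
    aeval (3/4 : ℂ) (Polynomial.bernoulli (j+1)) - aeval (1/4 : ℂ) (Polynomial.bernoulli (j+1))
      = ((j : ℂ) + 1) / 2 ^ (j+1) * eulerPoly j (1/2) := by
  rw [eulerPoly]
  have h1 : ((1:ℂ)/2 + 1)/2 = 3/4 := by norm_num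
  have h2 : ((1:ℂ)/2)/2 = 1/4 := by norm_num
  rw [h1, h2]
  have hj : ((j : ℂ) + 1) ≠ 0 := Nat.cast_add_one_ne_zero j
  have h2p : (2 : ℂ) ^ (j+1) ≠ 0 := pow_ne_zero _ two_ne_zero
  field_simp

lemma eulerPoly_expand (m : ℕ) (a : ℂ) :
    eulerPoly m ((a + 1)/2) =
      ∑ k ∈ range (m + 1), (m.choose k : ℂ) * eulerPoly k (1/2) * (a/2) ^ (m - k) := by
  rw [eulerPoly]
  have h1 : ((a + 1)/2 + 1)/2 = 3/4 + a/4 := by ring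
  have h2 : ((a + 1)/2)/2 = 1/4 + a/4 := by ring
  rw [h1, h2, aeval_bernoulli_add, aeval_bernoulli_add, ← Finset.sum_sub_distrib]
  have step : ∀ k ∈ range (m+2),
      ((m+1).choose k : ℂ) * aeval (3/4 : ℂ) (Polynomial.bernoulli k) * (a/4) ^ (m+1-k)
      - ((m+1).choose k : ℂ) * aeval (1/4 : ℂ) (Polynomial.bernoulli k) * (a/4) ^ (m+1-k)
      = ((m+1).choose k : ℂ)
        * (aeval (3/4 : ℂ) (Polynomial.bernoulli k) - aeval (1/4 : ℂ) (Polynomial.bernoulli k))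
        * (a/4) ^ (m+1-k) := by intro k _; ring
  rw [Finset.sum_congr rfl step, Finset.sum_range_succ']
  simp only [Nat.choose_zero_right, Nat.cast_one, Polynomial.bernoulli_zero, map_one, sub_self,
    one_mul, mul_zero, zero_mul, add_zero, mul_zero]
  rw [Finset.mul_sum]
  refine Finset.sum_congr rfl fun j hj => ?_
  rw [Finset.mem_range] at hj
  rw [bernoulli_diff_eq]
  have hsub : m + 1 - (j + 1) = m - j := by omega
  rw [hsub]
  obtain ⟨d, hd⟩ : ∃ d, m = j + d := ⟨m - j, by omega⟩
  subst hd
  have hM : (((j + d + 1).choose (j+1) : ℕ) : ℂ) * ((j:ℂ) + 1)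
      = ((j:ℂ) + (d:ℂ) + 1) * (((j+d).choose j : ℕ) : ℂ) := by
    have h := Nat.add_one_mul_choose_eq (j + d) j
    have h2 : ((j + d + 1).choose (j+1) * (j+1) : ℕ) = ((j+d+1) * ((j+d).choose j)) := by
      simpa [Nat.succ_eq_add_one] using h.symm
    have h3 := congrArg (Nat.cast : ℕ → ℂ) h2
    push_cast at h3
    linear_combination h3
  have hj1 : ((j : ℂ) + 1) ≠ 0 := by
    have : ((j:ℂ)+1) = ((j+1 : ℕ) : ℂ) := by push_cast; ring
    rw [this]; exact_mod_cast Nat.succ_ne_zero j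
  have hm1 : ((j : ℂ) + (d : ℂ) + 1) ≠ 0 := by
    have : ((j:ℂ)+(d:ℂ)+1) = ((j+d+1 : ℕ) : ℂ) := by push_cast; ring
    rw [this]; exact_mod_cast Nat.succ_ne_zero (j+d)
  have hpow : (2:ℂ) ^ (j + d + 1) * 2 ^ d = 2 ^ (j+1) * 4 ^ d := by
    have h4 : (4:ℂ) = 2^2 := by norm_num
    rw [h4, ← pow_mul, ← pow_add, ← pow_add]
    congr 1; ring
  rw [Nat.add_sub_cancel_left]
  field_simp
  rw [mul_assoc ((2:ℂ) ^ (j+d+1)) _ ((j:ℂ)+1), hM, div_pow, div_pow]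
  push_cast
  field_simp
  linear_combination ((((j+d).choose j : ℕ) : ℂ) * eulerPoly j (1/2) * a^d) * hpow

lemma altW (M k : ℕ) :
    ∑ j ∈ range (M+1), (-1:ℤ)^j * (M.choose j) * (j.choose k)
      = if k = M then (-1:ℤ)^M else 0 := by
  rcases lt_or_ge M k with h | h
  · rw [if_neg (by omega)]
    refine Finset.sum_eq_zero fun j hj => ?_
    rw [Finset.mem_range] at hj
    rw [Nat.choose_eq_zero_of_lt (show j < k by omega)]
    simp
  · have hsub : Finset.Ico k (M+1) ⊆ range (M+1) := by
      intro x hx; rw [Finset.mem_Ico] at hx; exact Finset.mem_range.mpr hx.2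
    rw [← Finset.sum_subset hsub (by
      intro j hj hnj
      rw [Finset.mem_range] at hj; rw [Finset.mem_Ico] at hnj
      rw [Nat.choose_eq_zero_of_lt (show j < k by omega)]
      simp)]
    rw [Finset.sum_Ico_eq_sum_range]
    have step : ∀ i ∈ range (M+1-k), (-1:ℤ)^(k+i) * (M.choose (k+i)) * ((k+i).choose k)
        = ((-1:ℤ)^k * (M.choose k)) * ((-1)^i * ((M-k).choose i)) := by
      intro i hi
      rw [Finset.mem_range] at hi
      have h1 : M.choose (k+i) * (k+i).choose k = M.choose k * (M-k).choose i := by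
        have h2 := Nat.choose_mul (n := M) (Nat.le_add_right k i)
        simpa using h2
      have h3 := congrArg (Nat.cast : ℕ → ℤ) h1
      push_cast at h3
      rw [pow_add]
      linear_combination ((-1:ℤ)^k * (-1:ℤ)^i) * h3
    rw [Finset.sum_congr rfl step, ← Finset.mul_sum]
    have hr : M + 1 - k = (M - k) + 1 := by omega
    rw [hr, Int.alternating_sum_range_choose]
    by_cases hkM : k = M
    · subst hkM; simp
    · rw [if_neg (by omega), if_neg hkM, mul_zero]

lemma altV (M k : ℕ) :
    ∑ j ∈ range (M+1), (-1:ℤ)^j * (M.choose j) * ((j+1).choose k)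
      = (if k = M then (-1:ℤ)^M else 0) + (if k = M + 1 then (-1:ℤ)^M else 0) := by
  rcases Nat.eq_zero_or_pos k with rfl | hk
  · have h := altW M 0
    simp only [Nat.choose_zero_right, Nat.cast_one, mul_one] at h ⊢
    rw [h, if_neg (show ¬(0 = M + 1) by omega), add_zero]
  · obtain ⟨k', rfl⟩ : ∃ k', k = k' + 1 := ⟨k - 1, by omega⟩
    have hsplit : ∀ j ∈ range (M+1), (-1:ℤ)^j * (M.choose j) * (((j+1).choose (k'+1) : ℕ) : ℤ)
        = (-1:ℤ)^j * (M.choose j) * (j.choose k') + (-1:ℤ)^j * (M.choose j) * (j.choose (k'+1)) := by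
      intro j _
      rw [Nat.choose_succ_succ]
      push_cast
      ring
    rw [Finset.sum_congr rfl hsplit, Finset.sum_add_distrib, altW, altW]
    by_cases h1 : k' = M
    · subst h1; simp
    · have h2 : ¬(k' + 1 = M + 1) := by omega
      simp only [if_neg h1, if_neg h2, zero_add, add_zero]


/-- Sum of Euler polynomials identity (Corollary, §3.1.1): for `n ≥ 0` and `a ≠ 0`,
`∑_{j=0}^{2n} (-a/2)^{-j} E(j+1,(a+1)/2) / (j! (2n-j)!) = E(2n) / (2 (2n)! a^{2n-1})`. -/
theorem euler_poly_sum (n : ℕ) (a : ℂ) (ha : a ≠ 0) :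
    ∑ j ∈ Finset.range (2 * n + 1),
      (-a / 2) ^ (-(j : ℤ)) * eulerPoly (j + 1) ((a + 1) / 2) /
        ((Nat.factorial j : ℂ) * (Nat.factorial (2 * n - j) : ℂ)) =
    eulerNumber (2 * n) / (2 * (Nat.factorial (2 * n) : ℂ) * a ^ (2 * (n : ℤ) - 1)) := by

  have ha2 : (a/2 : ℂ) ≠ 0 := div_ne_zero ha two_ne_zero
  set N := 2 * n with hN
  have hfac : ∀ j, ((j.factorial : ℂ) * ((N - j).factorial : ℂ)) ≠ 0 := fun j =>
    mul_ne_zero (Nat.cast_ne_zero.mpr j.factorial_ne_zero) (Nat.cast_ne_zero.mpr (N - j).factorial_ne_zero)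
  have hNfac : ((N.factorial : ℂ)) ≠ 0 := Nat.cast_ne_zero.mpr N.factorial_ne_zero
  -- the target summand shape
  set g : ℕ → ℕ → ℂ := fun j k =>
    ((-1:ℂ)^j * (((j+1).choose k : ℕ) : ℂ) / ((j.factorial : ℂ) * ((N - j).factorial : ℂ)))
      * (eulerPoly k (1/2) * (a/2) ^ ((1:ℤ) - (k:ℤ))) with hg
  have step1 : ∀ j ∈ range (N + 1),
      (-a / 2) ^ (-(j : ℤ)) * eulerPoly (j + 1) ((a + 1) / 2) /
        ((Nat.factorial j : ℂ) * (Nat.factorial (N - j) : ℂ))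
      = ∑ k ∈ range (N + 2), g j k := by
    intro j hj
    rw [Finset.mem_range] at hj
    have hneg : (-a/2 : ℂ) ^ (-(j:ℤ)) = (-1:ℂ)^j * (a/2) ^ (-(j:ℤ)) := by
      rw [zpow_neg, zpow_neg, zpow_natCast, zpow_natCast, neg_div, neg_pow, mul_inv]
      congr 1
      rw [← inv_pow, inv_neg, inv_one]
    rw [eulerPoly_expand, hneg, Finset.mul_sum, Finset.sum_div, mul_comm ((-1:ℂ)^j)]
    rw [show ∑ k ∈ range (N+2), g j k = ∑ k ∈ range (j+2), g j k from
      (Finset.sum_subset (by intro x hx; rw [Finset.mem_range] at hx ⊢; omega)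
        (by
          intro x hx hnx
          rw [Finset.mem_range] at hx hnx
          have : (j+1).choose x = 0 := Nat.choose_eq_zero_of_lt (by omega)
          simp [hg, this])).symm]
    refine Finset.sum_congr rfl fun i hi => ?_
    rw [Finset.mem_range] at hi
    have hzp : (a/2:ℂ) ^ (-(j:ℤ)) * (a/2) ^ ((j+1-i : ℕ)) = (a/2) ^ ((1:ℤ) - (i:ℤ)) := by
      rw [← zpow_natCast (a/2) (j+1-i), ← zpow_add₀ ha2]
      congr 1
      omega
    have hnum : (a/2:ℂ)^(-(j:ℤ)) * (-1)^j
          * ((((j+1).choose i : ℕ):ℂ) * eulerPoly i (1/2) * (a/2)^(j+1-i))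
        = (-1:ℂ)^j * (((j+1).choose i : ℕ):ℂ)
          * (eulerPoly i (1/2) * (a/2) ^ ((1:ℤ) - (i:ℤ))) := by
      linear_combination ((-1:ℂ)^j * (((j+1).choose i : ℕ):ℂ) * eulerPoly i (1/2)) * hzp
    rw [hg]
    simp only []
    rw [div_mul_eq_mul_div, hnum]
  rw [Finset.sum_congr rfl step1, Finset.sum_comm]
  have hV : ∀ k, (∑ j ∈ range (N+1), (-1:ℂ)^j * ((N.choose j : ℕ):ℂ) * (((j+1).choose k : ℕ):ℂ))
      = (if k = N then 1 else 0) + (if k = N+1 then 1 else 0) := by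
    intro k
    have h0 := altV N k
    have h1 := congrArg (Int.cast : ℤ → ℂ) h0
    push_cast at h1
    have hsign : (-1:ℂ)^N = 1 := by rw [hN, pow_mul]; norm_num
    rw [hsign] at h1
    rw [h1]
  have step2 : ∀ k ∈ range (N+2), (∑ j ∈ range (N+1), g j k)
      = (eulerPoly k (1/2) * (a/2) ^ ((1:ℤ) - (k:ℤ)))
        * (((if k = N then (1:ℂ) else 0) + (if k = N+1 then 1 else 0)) / (N.factorial : ℂ)) := by
    intro k _
    have hterm : ∀ j ∈ range (N+1), g j k
        = (eulerPoly k (1/2) * (a/2) ^ ((1:ℤ) - (k:ℤ)))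
          * (((-1:ℂ)^j * ((N.choose j : ℕ):ℂ) * (((j+1).choose k : ℕ):ℂ)) / (N.factorial : ℂ)) := by
      intro j hj
      rw [Finset.mem_range] at hj
      have hc : ((N.choose j : ℕ):ℂ) * (j.factorial : ℂ) * ((N-j).factorial : ℂ)
          = (N.factorial : ℂ) := by
        exact_mod_cast congrArg (Nat.cast : ℕ → ℂ)
          (Nat.choose_mul_factorial_mul_factorial (show j ≤ N by omega))
      rw [hg]
      simp only []
      rw [div_mul_eq_mul_div, ← mul_div_assoc, div_eq_div_iff (hfac j) hNfac]
      linear_combination (-((-1:ℂ)^j) * (((j+1).choose k : ℕ):ℂ)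
        * eulerPoly k (1/2) * (a/2) ^ ((1:ℤ) - (k:ℤ))) * hc
    rw [Finset.sum_congr rfl hterm, ← Finset.mul_sum, ← Finset.sum_div, hV]
  rw [Finset.sum_congr rfl step2, Finset.sum_range_succ, Finset.sum_range_succ]
  have hzero : ∀ k ∈ range N, (eulerPoly k (1/2) * (a/2) ^ ((1:ℤ) - (k:ℤ)))
        * (((if k = N then (1:ℂ) else 0) + (if k = N+1 then 1 else 0)) / (N.factorial : ℂ)) = 0 := by
    intro k hk
    rw [Finset.mem_range] at hk
    rw [if_neg (by omega), if_neg (by omega)]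
    simp
  rw [Finset.sum_eq_zero hzero, zero_add]
  have hodd : Odd (N+1) := ⟨n, by rw [hN]⟩
  rw [eulerPoly_half_odd (N+1) hodd, zero_mul, zero_mul, add_zero]
  rw [if_pos rfl, if_neg (show ¬(N = N+1) by omega), add_zero]
  -- final algebra
  rw [eulerNumber]
  have he : 2*(n:ℤ) - 1 = (N:ℤ) - 1 := by rw [hN]; push_cast; ring
  rw [he]
  have hA : a ^ ((N:ℤ)-1) ≠ 0 := zpow_ne_zero _ ha
  have hB : (2:ℂ) ^ ((N:ℤ)-1) ≠ 0 := zpow_ne_zero _ two_ne_zero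
  have hsplit : (a/2:ℂ) ^ ((1:ℤ) - (N:ℤ))
      = (a ^ ((N:ℤ)-1))⁻¹ * ((2:ℂ) ^ ((N:ℤ)-1)) := by
    rw [div_zpow, show (1:ℤ)-(N:ℤ) = -((N:ℤ)-1) by ring, zpow_neg, zpow_neg, div_eq_mul_inv, inv_inv]
  have h2N : (2:ℂ) ^ N = 2 * (2:ℂ) ^ ((N:ℤ)-1) := by
    rw [← zpow_natCast (2:ℂ) N, show ((N:ℕ):ℤ) = ((N:ℤ)-1)+1 by ring,
      zpow_add₀ two_ne_zero, zpow_one]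
    ring
  rw [hsplit, h2N]
  field_simp
end

section
/- For every non-negative integer n, the finite sum ∑_{j=0}^{n} (-1/2)^j · E(n+j) / ((n-j)! · j!) equals 2^(-n) / n!, where E(m) denotes the m-th Euler number. -/
open Finset Polynomial

section EulerAux

lemma aeval_bernoulli_expand (n : ℕ) (x : ℂ) :
    (aeval x (Polynomial.bernoulli n) : ℂ) =
      ∑ i ∈ range (n + 1), ((_root_.bernoulli i : ℚ) : ℂ) * (n.choose i : ℂ) * x ^ (n - i) := by
  rw [Polynomial.bernoulli, map_sum]
  refine Finset.sum_congr rfl fun i _ => ?_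
  rw [aeval_monomial, eq_ratCast]
  push_cast
  ring

lemma bernoulli_add_thm (n : ℕ) (x y : ℂ) :
    (aeval (x + y) (Polynomial.bernoulli n) : ℂ) =
      ∑ k ∈ range (n + 1), (n.choose k : ℂ) * aeval x (Polynomial.bernoulli k) * y ^ (n - k) := by
  rw [aeval_bernoulli_expand]
  simp_rw [aeval_bernoulli_expand, Finset.mul_sum, Finset.sum_mul]
  have L : ∀ i ∈ range (n + 1),
      ((_root_.bernoulli i : ℚ) : ℂ) * (n.choose i : ℂ) * (x + y) ^ (n - i) =
      ∑ t ∈ range (n - i + 1), ((_root_.bernoulli i : ℚ) : ℂ) * (n.choose i : ℂ) *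
        ((n - i).choose t : ℂ) * x ^ t * y ^ (n - i - t) := by
    intro i _
    rw [add_pow, Finset.mul_sum]
    refine Finset.sum_congr rfl fun t _ => ?_
    ring
  rw [Finset.sum_congr rfl L, Finset.sum_sigma', Finset.sum_sigma']
  refine Finset.sum_nbij' (fun p => ⟨p.1 + p.2, p.1⟩) (fun p => ⟨p.2, p.1 - p.2⟩) ?_ ?_ ?_ ?_ ?_
  · rintro ⟨i, t⟩ h
    simp only [Finset.mem_sigma, Finset.mem_range] at h ⊢
    omega
  · rintro ⟨k, i⟩ h
    simp only [Finset.mem_sigma, Finset.mem_range] at h ⊢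
    omega
  · rintro ⟨i, t⟩ h
    simp only [Finset.mem_sigma, Finset.mem_range] at h
    simp only [Nat.add_sub_cancel_left]
  · rintro ⟨k, i⟩ h
    simp only [Finset.mem_sigma, Finset.mem_range] at h
    simp only []
    congr 1
    omega
  · rintro ⟨i, t⟩ h
    simp only [Finset.mem_sigma, Finset.mem_range] at h
    have h1 : i + t ≤ n := by omega
    have h2 : i ≤ i + t := by omega
    have key : (n.choose (i + t) : ℂ) * ((i + t).choose i : ℂ) =
        (n.choose i : ℂ) * ((n - i).choose t : ℂ) := by
      rw [← Nat.cast_mul, ← Nat.cast_mul, Nat.choose_mul h2, Nat.add_sub_cancel_left]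
    have e1 : n - i - t = n - (i + t) := by omega
    have e2 : i + t - i = t := by omega
    rw [e1, e2] at *
    calc ((_root_.bernoulli i : ℚ) : ℂ) * (n.choose i : ℂ) * ((n - i).choose t : ℂ) * x ^ t *
          y ^ (n - (i + t))
        = ((n.choose i : ℂ) * ((n - i).choose t : ℂ)) *
            (((_root_.bernoulli i : ℚ) : ℂ) * x ^ t * y ^ (n - (i + t))) := by ring
      _ = ((n.choose (i + t) : ℂ) * (((i + t)).choose i : ℂ)) *
            (((_root_.bernoulli i : ℚ) : ℂ) * x ^ t * y ^ (n - (i + t))) := by rw [key]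
      _ = (n.choose (i + t) : ℂ) * (((_root_.bernoulli i : ℚ) : ℂ) * (((i + t)).choose i : ℂ) *
            x ^ t) * y ^ (n - (i + t)) := by ring


lemma aeval_bernoulli_zero (k : ℕ) :
    (aeval (0 : ℂ) (Polynomial.bernoulli k)) = ((_root_.bernoulli k : ℚ) : ℂ) := by
  have := Polynomial.bernoulli_eval_zero k
  have h : ((0:ℚ):ℂ) = 0 := by norm_num
  rw [show (0:ℂ) = algebraMap ℚ ℂ (0:ℚ) by norm_num, aeval_algebraMap_apply]
  simp [this]

lemma aeval_bernoulli_one (k : ℕ) :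
    (aeval (1 : ℂ) (Polynomial.bernoulli k)) = ((_root_.bernoulli' k : ℚ) : ℂ) := by
  have := Polynomial.bernoulli_eval_one k
  rw [show (1:ℂ) = algebraMap ℚ ℂ (1:ℚ) by norm_num, aeval_algebraMap_apply]
  simp [this]

lemma bernoulli'_eq (k : ℕ) : _root_.bernoulli' k = (-1) ^ k * _root_.bernoulli k := by
  rcases eq_or_ne k 1 with rfl | hk
  · rw [bernoulli'_one, _root_.bernoulli_one]; norm_num
  · rcases Nat.even_or_odd k with he | ho
    · rw [bernoulli_eq_bernoulli'_of_ne_one hk, he.neg_one_pow, one_mul]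
    · rcases eq_or_ne k 0 with rfl | h0
      · simp at ho
      · have h1 : 1 < k := by omega
        rw [bernoulli'_eq_zero_of_odd ho h1, bernoulli_eq_bernoulli'_of_ne_one hk,
          bernoulli'_eq_zero_of_odd ho h1, mul_zero]

lemma aeval_bernoulli_half_odd {n : ℕ} (hn : Odd n) :
    (aeval ((1:ℂ)/2) (Polynomial.bernoulli n)) = 0 := by
  have h1 : (aeval ((1:ℂ)/2) (Polynomial.bernoulli n)) =
      ∑ k ∈ range (n + 1), (n.choose k : ℂ) * ((_root_.bernoulli k : ℚ) : ℂ) * (1/2) ^ (n - k) := by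
    have := bernoulli_add_thm n 0 (1/2)
    simpa [aeval_bernoulli_zero] using this
  have h2 : (aeval ((1:ℂ)/2) (Polynomial.bernoulli n)) =
      ∑ k ∈ range (n + 1), (n.choose k : ℂ) * ((_root_.bernoulli' k : ℚ) : ℂ) * (-(1/2)) ^ (n - k) := by
    have := bernoulli_add_thm n 1 (-(1/2))
    rw [show (1:ℂ) + -(1/2) = 1/2 by norm_num] at this
    simpa [aeval_bernoulli_one] using this
  have h3 : (aeval ((1:ℂ)/2) (Polynomial.bernoulli n)) =
      - (aeval ((1:ℂ)/2) (Polynomial.bernoulli n)) := by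
    nth_rewrite 1 [h2]
    rw [h1, ← Finset.sum_neg_distrib]
    refine Finset.sum_congr rfl fun k hk => ?_
    simp only [Finset.mem_range] at hk
    have hkn : k ≤ n := by omega
    rw [bernoulli'_eq k]
    have hpow : (-(1/2 : ℂ)) ^ (n - k) = (-1) ^ (n - k) * (1/2) ^ (n - k) := by
      rw [neg_pow]
    push_cast
    rw [hpow]
    have hsign : ((-1 : ℂ)) ^ k * (-1) ^ (n - k) = -1 := by
      rw [← pow_add, show k + (n - k) = n by omega]
      exact Odd.neg_one_pow hn
    calc (n.choose k : ℂ) * ((-1) ^ k * ((_root_.bernoulli k : ℚ) : ℂ)) *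
          ((-1) ^ (n - k) * (1/2) ^ (n - k))
        = ((-1 : ℂ)) ^ k * (-1) ^ (n - k) *
            ((n.choose k : ℂ) * ((_root_.bernoulli k : ℚ) : ℂ) * (1/2) ^ (n - k)) := by ring
      _ = -((n.choose k : ℂ) * ((_root_.bernoulli k : ℚ) : ℂ) * (1/2) ^ (n - k)) := by
          rw [hsign]; ring
  have := h3
  linear_combination this / 2


end EulerAux

section EulerAux2

lemma euler_diff (j : ℕ) (x : ℂ) :
    aeval ((x + 1) / 2) (Polynomial.bernoulli (j + 1)) -
      aeval (x / 2) (Polynomial.bernoulli (j + 1)) =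
    ((j : ℂ) + 1) / 2 ^ (j + 1) * eulerPoly j x := by
  rw [eulerPoly]
  have h1 : ((j : ℂ) + 1) ≠ 0 := by
    have : ((j + 1 : ℕ) : ℂ) ≠ 0 := Nat.cast_ne_zero.mpr (Nat.succ_ne_zero j)
    push_cast at this; exact this
  have h2 : (2 : ℂ) ^ (j + 1) ≠ 0 := by norm_num
  push_cast
  field_simp

lemma eulerPoly_add (m : ℕ) (x y : ℂ) :
    eulerPoly m (x + y) =
      ∑ j ∈ range (m + 1), (m.choose j : ℂ) * eulerPoly j x * y ^ (m - j) := by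
  have e1 : (x + y + 1) / 2 = (x + 1) / 2 + y / 2 := by ring
  have e2 : (x + y) / 2 = x / 2 + y / 2 := by ring
  rw [eulerPoly, e1, e2, bernoulli_add_thm, bernoulli_add_thm, ← Finset.sum_sub_distrib]
  have step : ∀ k ∈ range (m + 1 + 1),
      ((m+1).choose k : ℂ) * aeval ((x+1)/2) (Polynomial.bernoulli k) * (y/2) ^ (m + 1 - k) -
      ((m+1).choose k : ℂ) * aeval (x/2) (Polynomial.bernoulli k) * (y/2) ^ (m + 1 - k) =
      ((m+1).choose k : ℂ) *
        (aeval ((x+1)/2) (Polynomial.bernoulli k) - aeval (x/2) (Polynomial.bernoulli k)) *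
        (y/2) ^ (m + 1 - k) := by intro k _; ring
  rw [Finset.sum_congr rfl step, Finset.sum_range_succ']
  have h0 : ((m+1).choose 0 : ℂ) *
      (aeval ((x+1)/2) (Polynomial.bernoulli 0) - aeval (x/2) (Polynomial.bernoulli 0)) *
      (y/2) ^ (m + 1 - 0) = 0 := by
    simp [Polynomial.bernoulli_zero]
  rw [h0, add_zero, Finset.mul_sum]
  refine Finset.sum_congr rfl fun j hj => ?_
  simp only [Finset.mem_range] at hj
  rw [euler_diff]
  have hch : ((m:ℂ) + 1) * (m.choose j : ℂ) = (((m+1).choose (j+1) : ℕ) : ℂ) * ((j : ℂ) + 1) := by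
    have := Nat.add_one_mul_choose_eq m j
    exact_mod_cast congrArg (Nat.cast : ℕ → ℂ) this
  have h1 : ((m : ℂ) + 1) ≠ 0 := by
    have : ((m + 1 : ℕ) : ℂ) ≠ 0 := Nat.cast_ne_zero.mpr (Nat.succ_ne_zero m)
    push_cast at this; exact this
  have h2 : (2 : ℂ) ≠ 0 := two_ne_zero
  have hmj : m + 1 - (j + 1) = m - j := by omega
  have hpow : (2:ℂ) ^ (j + 1) * 2 ^ (m - j) = 2 ^ (m + 1) := by
    rw [← pow_add]; congr 1; omega
  rw [hmj]
  have hy : (y / 2) ^ (m - j) = y ^ (m - j) / 2 ^ (m - j) := div_pow y 2 (m - j)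
  have hscal : (2:ℂ) ^ (m+1) / ((m:ℂ)+1) * ((((m+1).choose (j+1) : ℕ) : ℂ) *
      (((j:ℂ)+1) / 2 ^ (j+1)) * (1 / 2 ^ (m-j))) = (m.choose j : ℂ) := by
    have h3 : (2:ℂ) ^ (j+1) ≠ 0 := by norm_num
    have h4 : (2:ℂ) ^ (m-j) ≠ 0 := by norm_num
    calc (2:ℂ) ^ (m+1) / ((m:ℂ)+1) * ((((m+1).choose (j+1) : ℕ) : ℂ) *
          (((j:ℂ)+1) / 2 ^ (j+1)) * (1 / 2 ^ (m-j)))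
        = (2:ℂ) ^ (j+1) * 2 ^ (m-j) / ((m:ℂ)+1) * ((((m+1).choose (j+1) : ℕ) : ℂ) *
          (((j:ℂ)+1) / 2 ^ (j+1)) * (1 / 2 ^ (m-j))) := by rw [hpow]
      _ = ((((m+1).choose (j+1) : ℕ) : ℂ) * ((j:ℂ)+1)) / ((m:ℂ)+1) := by
          field_simp
      _ = (m.choose j : ℂ) := by rw [div_eq_iff h1]; linear_combination -hch
  rw [hy]
  push_cast
  push_cast at hscal
  linear_combination eulerPoly j x * y ^ (m - j) * hscal

lemma eulerPoly_zero_zero : eulerPoly 0 0 = 1 := by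
  rw [eulerPoly]
  rw [aeval_bernoulli_expand, aeval_bernoulli_expand]
  simp [Finset.sum_range_succ, _root_.bernoulli_one]

lemma eulerPoly_even_zero {m : ℕ} (hm : Even m) (h0 : m ≠ 0) : eulerPoly m 0 = 0 := by
  have hodd : Odd (m + 1) := Even.add_one hm
  have h1 : (0 + 1 : ℂ) / 2 = 1 / 2 := by norm_num
  rw [eulerPoly, h1, aeval_bernoulli_half_odd hodd]
  have h2 : (0 : ℂ) / 2 = 0 := by norm_num
  rw [h2, aeval_bernoulli_zero]
  have h3 : _root_.bernoulli (m + 1) = 0 := by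
    rw [bernoulli_eq_bernoulli'_of_ne_one (by omega), bernoulli'_eq_zero_of_odd hodd (by omega)]
  rw [h3]
  norm_num


lemma eulerNumber_expand (m : ℕ) :
    eulerNumber m = ∑ k ∈ range (m + 1), (m.choose k : ℂ) * (2 ^ k * eulerPoly k 0) := by
  have h : eulerPoly m (1/2) = eulerPoly m (0 + 1/2) := by norm_num
  rw [eulerNumber, h, eulerPoly_add, Finset.mul_sum]
  refine Finset.sum_congr rfl fun k hk => ?_
  simp only [Finset.mem_range] at hk
  have hpow : (2:ℂ) ^ m * (1/2) ^ (m - k) = 2 ^ k := by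
    rw [div_pow, one_pow]
    rw [show (2:ℂ)^m = 2^k * 2^(m-k) by rw [← pow_add]; congr 1; omega]
    field_simp
  calc (2:ℂ) ^ m * ((m.choose k : ℂ) * eulerPoly k 0 * (1/2) ^ (m - k))
      = (m.choose k : ℂ) * ((2:ℂ) ^ m * (1/2) ^ (m - k) * eulerPoly k 0) := by ring
    _ = (m.choose k : ℂ) * (2 ^ k * eulerPoly k 0) := by rw [hpow]

lemma poly_id (n : ℕ) :
    ∑ j ∈ range (n + 1), Polynomial.C ((n.choose j : ℂ) * 2 ^ (n - j) * (-1) ^ j) *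
      (X + 1) ^ (n + j) = (1 - X ^ 2 : ℂ[X]) ^ n := by
  have h1 : ∑ j ∈ range (n + 1), Polynomial.C ((n.choose j : ℂ) * 2 ^ (n - j) * (-1) ^ j) *
      (X + 1) ^ (n + j) =
      (X + 1) ^ n * ∑ j ∈ range (n + 1),
        (-(X + 1)) ^ j * 2 ^ (n - j) * ((n.choose j : ℕ) : ℂ[X]) := by
    rw [Finset.mul_sum]
    refine Finset.sum_congr rfl fun j _ => ?_
    simp only [map_mul, map_pow, map_neg, map_one, map_natCast, map_ofNat, pow_add]
    rw [show (-(X + 1) : ℂ[X]) ^ j = (-1) ^ j * (X + 1) ^ j from by rw [neg_pow]]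
    ring
  rw [h1, ← add_pow]
  rw [← mul_pow]
  congr 1
  ring

lemma coeff_odd_zero (n k : ℕ) (hk : Odd k) : ((1 - X ^ 2 : ℂ[X]) ^ n).coeff k = 0 := by
  rw [show (1 - X ^ 2 : ℂ[X]) = -X ^ 2 + 1 by ring, add_pow]
  rw [finset_sum_coeff]
  refine Finset.sum_eq_zero fun i _ => ?_
  have h : (-X ^ 2 + 1 : ℂ[X]) ^ 0 = 1 := pow_zero _
  have ht : ((-X ^ 2 : ℂ[X]) ^ i * 1 ^ (n - i) * ((n.choose i : ℕ) : ℂ[X])) =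
      Polynomial.C ((-1) ^ i * (n.choose i : ℂ)) * X ^ (2 * i) := by
    simp only [one_pow, mul_one, map_mul, map_pow, map_neg, map_one, map_natCast]
    rw [neg_pow, pow_mul]
    ring
  rw [ht, coeff_C_mul, coeff_X_pow]
  have : ¬ k = 2 * i := by rcases hk with ⟨t, rfl⟩; omega
  simp [this]

lemma coeff_zero_one (n : ℕ) : ((1 - X ^ 2 : ℂ[X]) ^ n).coeff 0 = 1 := by
  rw [coeff_zero_eq_eval_zero]
  simp

lemma key (n : ℕ) :
    ∑ j ∈ range (n + 1), (n.choose j : ℂ) * 2 ^ (n - j) * (-1) ^ j * eulerNumber (n + j) = 1 := by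
  have step1 : ∀ j ∈ range (n + 1),
      (n.choose j : ℂ) * 2 ^ (n - j) * (-1) ^ j * eulerNumber (n + j) =
      ∑ k ∈ range (2 * n + 1), (n.choose j : ℂ) * 2 ^ (n - j) * (-1) ^ j *
        (((n + j).choose k : ℂ) * (2 ^ k * eulerPoly k 0)) := by
    intro j hj
    simp only [Finset.mem_range] at hj
    rw [eulerNumber_expand, Finset.mul_sum]
    refine (Finset.sum_subset (Finset.range_subset_range.mpr (by omega)) fun k hk hk2 => ?_)
    simp only [Finset.mem_range] at hk hk2
    have : (n + j).choose k = 0 := Nat.choose_eq_zero_of_lt (by omega)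
    rw [this]
    push_cast
    ring
  rw [Finset.sum_congr rfl step1, Finset.sum_comm]
  have step2 : ∀ k ∈ range (2 * n + 1),
      ∑ j ∈ range (n + 1), (n.choose j : ℂ) * 2 ^ (n - j) * (-1) ^ j *
        (((n + j).choose k : ℂ) * (2 ^ k * eulerPoly k 0)) =
      (2 ^ k * eulerPoly k 0) * ((1 - X ^ 2 : ℂ[X]) ^ n).coeff k := by
    intro k _
    have hc : ((1 - X ^ 2 : ℂ[X]) ^ n).coeff k =
        ∑ j ∈ range (n + 1), ((n.choose j : ℂ) * 2 ^ (n - j) * (-1) ^ j) *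
          (((n + j).choose k : ℕ) : ℂ) := by
      rw [← poly_id, finset_sum_coeff]
      refine Finset.sum_congr rfl fun j _ => ?_
      rw [coeff_C_mul, coeff_X_add_one_pow]
    rw [hc, Finset.mul_sum]
    refine Finset.sum_congr rfl fun j _ => ?_
    ring
  rw [Finset.sum_congr rfl step2]
  rw [Finset.sum_eq_single 0]
  · rw [coeff_zero_one, eulerPoly_zero_zero]; norm_num
  · intro k _ hk0
    rcases Nat.even_or_odd k with he | ho
    · rw [eulerPoly_even_zero he hk0]; ring
    · rw [coeff_odd_zero n k ho]; ring
  · intro h; exact absurd (Finset.mem_range.mpr (by omega)) h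


end EulerAux2

/-- Euler number sum identity (special case `J = 1`):
`∑_{j=0}^{n} (-1/2)^j E(n+j) / ((n-j)! j!) = 2^{-n} / n!`. -/
theorem euler_number_sum (n : ℕ) :
    ∑ j ∈ Finset.range (n + 1),
      (-1 / 2 : ℂ) ^ j * eulerNumber (n + j) /
        ((Nat.factorial (n - j) : ℂ) * (Nat.factorial j : ℂ)) =
    (2 : ℂ) ^ (-(n : ℤ)) / (Nat.factorial n : ℂ) := by
  have hterm : ∀ j ∈ range (n + 1),
      (-1 / 2 : ℂ) ^ j * eulerNumber (n + j) /
        ((Nat.factorial (n - j) : ℂ) * (Nat.factorial j : ℂ)) =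
      (n.choose j : ℂ) * 2 ^ (n - j) * (-1) ^ j * eulerNumber (n + j) *
        ((2 : ℂ) ^ n * (Nat.factorial n : ℂ))⁻¹ := by
    intro j hj
    simp only [Finset.mem_range] at hj
    have hjn : j ≤ n := by omega
    have hfact : ((Nat.factorial n : ℕ) : ℂ) =
        (n.choose j : ℂ) * (Nat.factorial j : ℂ) * (Nat.factorial (n - j) : ℂ) := by
      exact_mod_cast congrArg (Nat.cast : ℕ → ℂ) (Nat.choose_mul_factorial_mul_factorial hjn).symm
    have h1 : ((Nat.factorial (n - j) : ℕ) : ℂ) ≠ 0 := Nat.cast_ne_zero.mpr (Nat.factorial_ne_zero _)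
    have h2 : ((Nat.factorial j : ℕ) : ℂ) ≠ 0 := Nat.cast_ne_zero.mpr (Nat.factorial_ne_zero _)
    have h3 : ((Nat.factorial n : ℕ) : ℂ) ≠ 0 := Nat.cast_ne_zero.mpr (Nat.factorial_ne_zero _)
    have h4 : (2 : ℂ) ^ n ≠ 0 := by norm_num
    have hp : (2:ℂ) ^ j * 2 ^ (n - j) = 2 ^ n := by rw [← pow_add]; congr 1; omega
    have hneg : (-1/2 : ℂ) ^ j = (-1) ^ j / 2 ^ j := by
      rw [div_pow, neg_pow, neg_pow, one_pow]
    rw [hneg, hfact]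
    have h5 : (2 : ℂ) ^ j ≠ 0 := by norm_num
    have h6 : (n.choose j : ℂ) ≠ 0 := Nat.cast_ne_zero.mpr (Nat.choose_pos hjn).ne'
    field_simp
    ring_nf
    rw [← hp]
    ring
  rw [Finset.sum_congr rfl hterm, ← Finset.sum_mul, key, one_mul]
  rw [zpow_neg, zpow_natCast, mul_inv, div_eq_mul_inv]
end

section
/- For real s > 0 and real a > 0, the integral ∫_0^∞ v^(s-1) e^(-a v) / cosh(v) dv equals 2^(1-2s) Γ(s) (ζ(s, a/4 + 1/4) - ζ(s, a/4 + 3/4)). -/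
open MeasureTheory Complex Set Filter

/-- The Hurwitz zeta function `ζ(s, q)` for a real parameter `q > 0` (analytically
continued in `s`), expressed via Mathlib's `HurwitzZeta.hurwitzZeta` on the unit
interval: `ζ(s,q) = ζ(s, fract q) - ∑_{k < ⌊q⌋} (fract q + k)^{-s}`. -/
noncomputable def hzeta (s : ℂ) (q : ℝ) : ℂ :=
  HurwitzZeta.hurwitzZeta (↑(Int.fract q) : UnitAddCircle) s -
    ∑ k ∈ Finset.range ⌊q⌋₊, (((Int.fract q : ℝ) : ℂ) + (k : ℂ)) ^ (-s)

lemma hasSum_hzeta {q : ℝ} (hq : 0 < q) {z : ℂ} (hz : 1 < z.re) :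
    HasSum (fun n : ℕ => (((q + n : ℝ)) : ℂ) ^ (-z)) (hzeta z q) := by
  have h0 : (Int.fract q) ∈ Set.Icc (0:ℝ) 1 := ⟨Int.fract_nonneg q, (Int.fract_lt_one q).le⟩
  have h := HurwitzZeta.hasSum_hurwitzZeta_of_one_lt_re h0 hz
  have h' : HasSum (fun n : ℕ => (((Int.fract q : ℝ):ℂ) + (n:ℂ)) ^ (-z))
      (HurwitzZeta.hurwitzZeta (↑(Int.fract q) : UnitAddCircle) z) := by
    refine h.congr_fun fun n => ?_
    rw [cpow_neg, one_div, add_comm]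
  have h2 := (hasSum_nat_add_iff' (f := fun n : ℕ => (((Int.fract q : ℝ):ℂ) + (n:ℂ)) ^ (-z))
      ⌊q⌋₊).2 h'
  refine h2.congr_fun fun n => ?_
  congr 1
  have : q + (n : ℝ) = Int.fract q + ((n + ⌊q⌋₊ : ℕ) : ℝ) := by
    push_cast
    rw [natCast_floor_eq_intCast_floor hq.le]
    linarith [Int.fract_add_floor q]
  norm_cast

lemma real_cosh_id (a t : ℝ) :
    Real.exp (-a*t) / Real.cosh t = 2 * Real.exp (-(a+1)*t) / (1 + Real.exp (-2*t)) := by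
  rw [Real.cosh_eq, div_eq_div_iff (by positivity) (by positivity)]
  have e1 : Real.exp (-(a*t)) * Real.exp (-(2*t)) = Real.exp ((-1 + -a)*t) * Real.exp (-t) := by
    rw [← Real.exp_add, ← Real.exp_add]; congr 1; ring
  have e2 : Real.exp (-(a*t)) = Real.exp ((-1 + -a)*t) * Real.exp t := by
    rw [← Real.exp_add]; congr 1; ring
  field_simp
  rw [show -(t*(a+1)) = (-1 + -a)*t by ring, show -(t*2) = -(2*t) by ring]
  linear_combination e1 + e2

lemma hasSum_exp_div_cosh {a : ℝ} (t : ℝ) (ht : 0 < t) :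
    HasSum (fun n : ℕ => 2 * (-1:ℝ)^n * Real.exp (-(a + (2*n+1)) * t))
      (Real.exp (-a*t) / Real.cosh t) := by
  rw [real_cosh_id]
  have hlt : ‖-Real.exp (-2*t)‖ < 1 := by
    rw [norm_neg, Real.norm_eq_abs, abs_of_pos (Real.exp_pos _)]
    exact Real.exp_lt_one_iff.mpr (by nlinarith)
  have h := (hasSum_geometric_of_norm_lt_one hlt).mul_left (2 * Real.exp (-(a+1)*t))
  rw [sub_neg_eq_add] at h
  rw [div_eq_mul_inv]
  refine h.congr_fun fun n => ?_
  rw [show (-Real.exp (-2*t)) ^ n = (-1:ℝ)^n * Real.exp ((n:ℝ) * (-2*t)) by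
    rw [neg_pow, Real.exp_nat_mul]]
  have e : Real.exp (-(a + (2*(n:ℝ)+1)) * t) = Real.exp (-(a+1)*t) * Real.exp ((n:ℝ)*(-2*t)) := by
    rw [← Real.exp_add]; congr 1; ring
  rw [e]; ring

-- summability of 2/(a+2n+1)^σ for σ > 1, a > 0
lemma summable_aux {a σ : ℝ} (ha : 0 < a) (hσ : 1 < σ) :
    Summable fun n : ℕ => ‖(2 * (-1:ℂ)^n)‖ / (a + (2*n+1)) ^ σ := by
  have h1 : Summable fun n : ℕ => 2 * (1 / ((n:ℝ)+1) ^ σ) := by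
    refine Summable.mul_left 2 ?_
    have := (Real.summable_one_div_nat_rpow (p := σ)).mpr hσ
    exact_mod_cast (summable_nat_add_iff 1).mpr this
  refine h1.of_nonneg_of_le (fun n => by positivity) fun n => ?_
  have hb : ((n:ℝ)+1) ≤ a + (2*n+1) := by linarith [Nat.cast_nonneg (α := ℝ) n]
  have h0 : (0:ℝ) < ((n:ℝ)+1) := by positivity
  have : ((n:ℝ)+1) ^ σ ≤ (a + (2*n+1)) ^ σ := Real.rpow_le_rpow h0.le hb (by linarith)
  rw [show ‖(2 * (-1:ℂ)^n)‖ = 2 by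
    rw [norm_mul, norm_pow, norm_neg, norm_one, one_pow, mul_one]; simp]
  rw [div_le_iff₀ (by positivity)]
  have hp : (0:ℝ) < ((n:ℝ)+1) ^ σ := Real.rpow_pos_of_pos h0 σ
  rw [mul_one_div, div_mul_eq_mul_div, le_div_iff₀ hp]
  nlinarith

lemma log_two_im : (Complex.log 2).im = 0 := by
  rw [Complex.log_im, show (2:ℂ) = ((2:ℝ):ℂ) by norm_num,
    Complex.arg_ofReal_of_nonneg (by norm_num)]

lemma four_cpow (z : ℂ) : (4:ℂ)^z = (2:ℂ)^(2*z) := by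
  rw [cpow_mul]
  · norm_num
  · rw [mul_im, log_two_im]; simp [Real.pi_pos]
  · rw [mul_im, log_two_im]; simp [Real.pi_pos.le]

lemma key_cpow {x : ℝ} (hx : 0 < x) (z : ℂ) :
    (2:ℂ)^(1-2*z) * ((x/4 : ℝ):ℂ)^(-z) = 2 * ((x:ℝ):ℂ)^(-z) := by
  have h14 : ((x/4 : ℝ):ℂ) = ((x:ℝ):ℂ) * ((1/4:ℝ):ℂ) := by push_cast; ring
  rw [h14, mul_cpow_ofReal_nonneg hx.le (by norm_num)]
  have h4 : ((1/4:ℝ):ℂ)^(-z) = (4:ℂ)^z := by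
    have : ((1/4:ℝ):ℂ) = ((4:ℂ))⁻¹ := by norm_num
    rw [this, inv_cpow _ _ (by
      rw [show (4:ℂ) = ((4:ℝ):ℂ) by norm_num, Complex.arg_ofReal_of_nonneg (by norm_num)]
      exact Real.pi_ne_zero.symm), cpow_neg, inv_inv]
  rw [h4, four_cpow, mul_comm ((x:ℂ)^(-z)), ← mul_assoc, ← cpow_add _ _ (by norm_num)]
  norm_num

lemma mellin_eq_of_one_lt_re {a : ℝ} (ha : 0 < a) {z : ℂ} (hz : 1 < z.re) :
    mellin (fun t : ℝ => ((Real.exp (-a*t) / Real.cosh t : ℝ) : ℂ)) z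
      = 2 ^ (1 - 2*z) * Complex.Gamma z * (hzeta z (a/4+1/4) - hzeta z (a/4+3/4)) := by
  have hz0 : 0 < z.re := lt_trans one_pos hz
  have hp : ∀ n : ℕ, (2 * (-1:ℂ)^n) = 0 ∨ 0 < a + (2*(n:ℝ)+1) := fun n =>
    Or.inr (by positivity)
  have hF : ∀ t ∈ Ioi (0:ℝ), HasSum (fun n : ℕ =>
      (2 * (-1:ℂ)^n) * ((Real.exp (-(a + (2*(n:ℝ)+1)) * t) : ℝ) : ℂ))
      ((Real.exp (-a*t) / Real.cosh t : ℝ) : ℂ) := by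
    intro t ht
    refine (hasSum_ofReal.mpr (hasSum_exp_div_cosh (a := a) t ht)).congr_fun fun n => ?_
    push_cast; ring
  have hm := hasSum_mellin (F := fun t : ℝ => ((Real.exp (-a*t) / Real.cosh t : ℝ) : ℂ))
    hp hz0 hF (summable_aux ha hz)
  -- the other side
  set c : ℂ := 2 ^ (1 - 2*z) * Complex.Gamma z with hc
  set g : ℕ → ℂ := fun n => Complex.Gamma z * (2 * (-1:ℂ)^n) / ((a + (2*(n:ℝ)+1) : ℝ):ℂ) ^ z
    with hg
  have hq1 : (0:ℝ) < a/4 + 1/4 := by linarith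
  have hq2 : (0:ℝ) < a/4 + 3/4 := by linarith
  have hEven : HasSum (fun k => g (2*k)) (c * hzeta z (a/4+1/4)) := by
    refine ((hasSum_hzeta hq1 hz).mul_left c).congr_fun fun n => ?_
    have hx : (0:ℝ) < a + (4*n+1) := by positivity
    have h1 : (a/4+1/4 + (n:ℝ)) = (a + (4*n+1))/4 := by ring
    have hbase : (a + (2 * ((2*n : ℕ) : ℝ) + 1) : ℝ) = a + (4*n+1) := by push_cast; ring
    rw [hg, hc]
    simp only [h1, hbase]
    rw [show ((-1:ℂ))^(2*n) = 1 by rw [pow_mul]; norm_num]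
    rw [div_eq_mul_inv, ← cpow_neg]
    linear_combination -Complex.Gamma z * key_cpow hx z
  have hOdd : HasSum (fun k => g (2*k+1)) (-(c * hzeta z (a/4+3/4))) := by
    refine ((hasSum_hzeta hq2 hz).mul_left c).neg.congr_fun fun n => ?_
    have hx : (0:ℝ) < a + (4*n+3) := by positivity
    have h1 : (a/4+3/4 + (n:ℝ)) = (a + (4*n+3))/4 := by ring
    have hbase : (a + (2 * ((2*n+1 : ℕ) : ℝ) + 1) : ℝ) = a + (4*n+3) := by push_cast; ring
    rw [hg, hc]
    simp only [h1, hbase]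
    rw [show ((-1:ℂ))^(2*n+1) = -1 by rw [pow_succ, pow_mul]; norm_num]
    rw [div_eq_mul_inv, ← cpow_neg]
    linear_combination Complex.Gamma z * key_cpow hx z
  have htot := hEven.even_add_odd hOdd
  rw [hm.unique htot, hc]
  ring

lemma diffG {q1 q2 : ℝ} {z : ℂ} (hz : 0 < z.re) :
    DifferentiableAt ℂ (fun w => (2:ℂ) ^ (1 - 2*w) * Complex.Gamma w *
      (hzeta w q1 - hzeta w q2)) z := by
  have hz0 : z ≠ 0 := fun h => by simp [h] at hz
  have d1 : DifferentiableAt ℂ (fun w => (2:ℂ) ^ (1 - 2*w)) z :=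
    (differentiableAt_const (1:ℂ)).sub ((differentiableAt_id.const_mul 2)) |>.const_cpow
      (Or.inl two_ne_zero)
  have d2 : DifferentiableAt ℂ Complex.Gamma z :=
    Complex.differentiableAt_Gamma z (fun m h => by
      rw [h] at hz
      simp only [neg_re, Complex.natCast_re, neg_pos] at hz
      exact absurd hz (Nat.cast_nonneg m).not_gt)
  have dsum : ∀ q : ℝ, DifferentiableAt ℂ (fun w =>
      ∑ k ∈ Finset.range ⌊q⌋₊, (((Int.fract q : ℝ) : ℂ) + (k : ℂ)) ^ (-w)) z := by
    intro q
    refine DifferentiableAt.fun_sum fun k _ => ?_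
    exact (differentiableAt_id.neg).const_cpow (Or.inr (neg_ne_zero.mpr hz0))
  have dH : DifferentiableAt ℂ (fun w =>
      HurwitzZeta.hurwitzZeta (↑(Int.fract q1) : UnitAddCircle) w -
      HurwitzZeta.hurwitzZeta (↑(Int.fract q2) : UnitAddCircle) w) z := by
    by_cases h1 : z = 1
    · subst h1
      have e : (fun w => HurwitzZeta.hurwitzZeta (↑(Int.fract q1) : UnitAddCircle) w -
          HurwitzZeta.hurwitzZeta (↑(Int.fract q2) : UnitAddCircle) w) =
          fun w => (HurwitzZeta.hurwitzZeta (↑(Int.fract q1) : UnitAddCircle) w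
            - 1 / (w - 1) / Complex.Gammaℝ w) -
          (HurwitzZeta.hurwitzZeta (↑(Int.fract q2) : UnitAddCircle) w
            - 1 / (w - 1) / Complex.Gammaℝ w) := by
        funext w; ring
      rw [e]
      exact (HurwitzZeta.differentiableAt_hurwitzZeta_sub_one_div _).sub
        (HurwitzZeta.differentiableAt_hurwitzZeta_sub_one_div _)
    · exact (HurwitzZeta.differentiableAt_hurwitzZeta _ h1).sub
        (HurwitzZeta.differentiableAt_hurwitzZeta _ h1)
  have : DifferentiableAt ℂ (fun w => hzeta w q1 - hzeta w q2) z := by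
    have e : (fun w => hzeta w q1 - hzeta w q2) = fun w =>
        (HurwitzZeta.hurwitzZeta (↑(Int.fract q1) : UnitAddCircle) w -
         HurwitzZeta.hurwitzZeta (↑(Int.fract q2) : UnitAddCircle) w) -
        ((∑ k ∈ Finset.range ⌊q1⌋₊, (((Int.fract q1 : ℝ) : ℂ) + (k : ℂ)) ^ (-w)) -
         (∑ k ∈ Finset.range ⌊q2⌋₊, (((Int.fract q2 : ℝ) : ℂ) + (k : ℂ)) ^ (-w))) := by
      funext w; simp only [hzeta]; ring
    rw [e]
    exact dH.sub ((dsum q1).sub (dsum q2))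
  exact (d1.mul d2).mul this

-- differentiability of the Mellin transform
lemma diffF {a : ℝ} (ha : 0 < a) {z : ℂ} (hz : 0 < z.re) :
    DifferentiableAt ℂ (mellin (fun t : ℝ => ((Real.exp (-a*t) / Real.cosh t : ℝ) : ℂ))) z := by
  have hcont : Continuous (fun t : ℝ => ((Real.exp (-a*t) / Real.cosh t : ℝ) : ℂ)) := by
    refine Complex.continuous_ofReal.comp ?_
    exact (Real.continuous_exp.comp (continuous_const.mul continuous_id)).div
      Real.continuous_cosh fun t => (Real.cosh_pos t).ne'
  refine mellin_differentiableAt_of_isBigO_rpow_exp ha (hcont.locallyIntegrable.locallyIntegrableOn _)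
    ?_ (b := 0) ?_ (by simpa using hz)
  · -- O(exp(-a t)) at top
    rw [Asymptotics.isBigO_iff]
    refine ⟨1, Eventually.of_forall fun t => ?_⟩
    simp only [Complex.norm_real, Real.norm_eq_abs, one_mul, norm_norm]
    rw [_root_.abs_of_nonneg (by positivity : (0:ℝ) ≤ Real.exp (-a*t) / Real.cosh t),
      _root_.abs_of_pos (Real.exp_pos _)]
    rw [div_le_iff₀ (Real.cosh_pos t)]
    nlinarith [Real.one_le_cosh t, Real.exp_pos (-a*t)]
  · -- O(t^0) near 0
    rw [Asymptotics.isBigO_iff]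
    refine ⟨1, eventually_nhdsWithin_of_forall fun t (ht : 0 < t) => ?_⟩
    simp only [Complex.norm_real, Real.norm_eq_abs, neg_zero, Real.rpow_zero, one_mul]
    rw [_root_.abs_of_nonneg (by positivity : (0:ℝ) ≤ Real.exp (-a*t) / Real.cosh t), _root_.abs_one]
    rw [div_le_one (Real.cosh_pos t)]
    calc Real.exp (-a*t) ≤ 1 := Real.exp_le_one_iff.mpr (by nlinarith)
      _ ≤ Real.cosh t := Real.one_le_cosh t

/-- `∫_0^∞ v^{s-1} e^{-av} / cosh v dv = 2^{1-2s} Γ(s) (ζ(s,a/4+1/4) - ζ(s,a/4+3/4))`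
for real `s > 0`, `a > 0`. -/
theorem integral_exp_div_cosh (s a : ℝ) (hs : 0 < s) (ha : 0 < a) :
    (↑(∫ v in Set.Ioi (0 : ℝ), v ^ (s - 1) * Real.exp (-a * v) / Real.cosh v) : ℂ) =
      2 ^ (1 - 2 * (s : ℂ)) * Complex.Gamma s *
        (hzeta s (a / 4 + 1 / 4) - hzeta s (a / 4 + 3 / 4)) := by
  set f : ℝ → ℂ := fun t => ((Real.exp (-a*t) / Real.cosh t : ℝ) : ℂ) with hf
  set G : ℂ → ℂ := fun w => (2:ℂ) ^ (1 - 2*w) * Complex.Gamma w *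
      (hzeta w (a/4+1/4) - hzeta w (a/4+3/4)) with hG
  set U : Set ℂ := {w : ℂ | 0 < w.re} with hUdef
  have hU : IsOpen U := isOpen_lt continuous_const Complex.continuous_re
  have hpre : IsPreconnected U := (convex_halfSpace_re_gt 0).isPreconnected
  have hFa : AnalyticOnNhd ℂ (mellin f) U :=
    DifferentiableOn.analyticOnNhd (fun w hw => (diffF ha hw).differentiableWithinAt) hU
  have hGa : AnalyticOnNhd ℂ G U :=
    DifferentiableOn.analyticOnNhd (fun w hw => (diffG hw).differentiableWithinAt) hU
  have h2U : (2:ℂ) ∈ U := by simp [hUdef]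
  have hfg : mellin f =ᶠ[nhds 2] G := by
    have hopen : IsOpen {w : ℂ | 1 < w.re} := isOpen_lt continuous_const Complex.continuous_re
    refine Filter.eventuallyEq_of_mem (hopen.mem_nhds (by simp)) fun w hw => ?_
    exact mellin_eq_of_one_lt_re ha hw
  have heq : Set.EqOn (mellin f) G U :=
    hFa.eqOn_of_preconnected_of_eventuallyEq hGa hpre h2U hfg
  have hkey : mellin f (s:ℂ) = G (s:ℂ) := heq (by simpa [hUdef] using hs)
  have hmel : (↑(∫ v in Set.Ioi (0 : ℝ), v ^ (s - 1) * Real.exp (-a * v) / Real.cosh v) : ℂ)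
      = mellin f (s:ℂ) := by
    rw [mellin]
    have step1 : ∫ t in Set.Ioi (0:ℝ), (t:ℂ) ^ ((s:ℂ) - 1) • f t
        = ∫ t in Set.Ioi (0:ℝ), ((t ^ (s-1) * Real.exp (-a*t) / Real.cosh t : ℝ) : ℂ) := by
      refine setIntegral_congr_fun measurableSet_Ioi fun t (ht : 0 < t) => ?_
      rw [hf]
      have h1 : ((t ^ (s-1) : ℝ) : ℂ) = (t:ℂ) ^ ((s:ℂ) - 1) := by
        rw [Complex.ofReal_cpow ht.le]; push_cast; ring_nf
      simp only [smul_eq_mul]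
      rw [← h1]
      push_cast
      ring
    rw [step1]
    exact integral_ofReal.symm
  rw [hmel, hkey]
end

section
/- For real s > 0 and real a > 0, the integral ∫_0^∞ e^(-a w) w^s sinh(w) / cosh(w)^2 dw equals 2^(-2s) Γ(s+1) (2(ζ(s,q) - ζ(s,q+1/2)) - (a/2)(ζ(s+1,q) - ζ(s+1,q+1/2))), where q = a/4 + 1/4. -/
open MeasureTheory

namespace HZAux

open Complex Set Filter Asymptotics

/-- Dirichlet series representation of `hzeta` for `1 < re s`. -/
lemma hzeta_hasSum {q : ℝ} (hq : 0 < q) {s : ℂ} (hs : 1 < s.re) :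
    HasSum (fun n : ℕ => ((n : ℂ) + (q : ℂ)) ^ (-s)) (hzeta s q) := by
  have h0' : HasSum (fun n : ℕ => ((n : ℂ) + ((Int.fract q : ℝ) : ℂ)) ^ (-s))
      (HurwitzZeta.hurwitzZeta (↑(Int.fract q) : UnitAddCircle) s) := by
    refine (HurwitzZeta.hasSum_hurwitzZeta_of_one_lt_re
      ⟨Int.fract_nonneg q, (Int.fract_lt_one q).le⟩ hs).congr_fun fun n => ?_
    rw [cpow_neg, one_div]
  have h1 := (hasSum_nat_add_iff'
      (f := fun n : ℕ => ((n : ℂ) + ((Int.fract q : ℝ) : ℂ)) ^ (-s)) ⌊q⌋₊).mpr h0'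
  have hfl : ((⌊q⌋₊ : ℝ)) + Int.fract q = q := by
    rw [natCast_floor_eq_intCast_floor hq.le]
    exact Int.floor_add_fract q
  have hflC : ((⌊q⌋₊ : ℂ)) + ((Int.fract q : ℝ) : ℂ) = (q : ℂ) := by
    have := congrArg (fun x : ℝ => (x : ℂ)) hfl
    push_cast at this ⊢
    exact this
  have h2 : HasSum (fun n : ℕ => ((n : ℂ) + (q : ℂ)) ^ (-s))
      (HurwitzZeta.hurwitzZeta (↑(Int.fract q) : UnitAddCircle) s -
        ∑ i ∈ Finset.range ⌊q⌋₊, ((i : ℂ) + ((Int.fract q : ℝ) : ℂ)) ^ (-s)) := by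
    refine h1.congr_fun fun n => ?_
    congr 1
    push_cast
    rw [add_assoc, hflC]
  have h3 : (∑ i ∈ Finset.range ⌊q⌋₊, ((i : ℂ) + ((Int.fract q : ℝ) : ℂ)) ^ (-s))
      = ∑ k ∈ Finset.range ⌊q⌋₊, (((Int.fract q : ℝ) : ℂ) + (k : ℂ)) ^ (-s) := by
    refine Finset.sum_congr rfl fun k _ => ?_
    rw [add_comm]
  rw [hzeta, ← h3]
  exact h2

/-- The alternating sum `∑ (-1)^n (a+2n+1)^{-z}` in terms of Hurwitz zeta values. -/
lemma hasSum_alt {a : ℝ} (ha : 0 < a) {z : ℂ} (hz : 1 < z.re) :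
    HasSum (fun n : ℕ => (-1 : ℂ) ^ n * ((a + 2 * n + 1 : ℝ) : ℂ) ^ (-z))
      (((2 : ℝ) : ℂ) ^ (-z) * ((2 : ℝ) : ℂ) ^ (-z) *
        (hzeta z (a / 4 + 1 / 4) - hzeta z (a / 4 + 1 / 4 + 1 / 2))) := by
  set q : ℝ := a / 4 + 1 / 4 with hqdef
  have hq : 0 < q := by rw [hqdef]; linarith
  have hq' : 0 < q + 1 / 2 := by linarith
  have key : ∀ (c : ℝ), 0 ≤ c →
      ((4 * c : ℝ) : ℂ) ^ (-z) = ((2:ℝ):ℂ) ^ (-z) * ((2:ℝ):ℂ) ^ (-z) * ((c : ℝ) : ℂ) ^ (-z) := by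
    intro c hc
    have h4 : (4 * c : ℝ) = 2 * (2 * c) := by ring
    rw [h4, Complex.ofReal_mul, Complex.mul_cpow_ofReal_nonneg (by norm_num) (by linarith),
      Complex.ofReal_mul, Complex.mul_cpow_ofReal_nonneg (by norm_num) hc, mul_assoc]
  have heven : HasSum (fun m : ℕ => (-1 : ℂ) ^ (2 * m) * ((a + 2 * (2 * m : ℕ) + 1 : ℝ) : ℂ) ^ (-z))
      (((2:ℝ):ℂ) ^ (-z) * ((2:ℝ):ℂ) ^ (-z) * hzeta z q) := by
    refine ((hzeta_hasSum hq hz).mul_left _).congr_fun fun m => ?_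
    have h1 : (a + 2 * ((2 * m : ℕ) : ℝ) + 1 : ℝ) = 4 * ((m : ℝ) + q) := by
      rw [hqdef]; push_cast; ring
    rw [pow_mul, neg_one_sq, one_pow, one_mul, h1, key _ (by positivity)]
    push_cast
    ring
  have hodd : HasSum
      (fun m : ℕ => (-1 : ℂ) ^ (2 * m + 1) * ((a + 2 * (2 * m + 1 : ℕ) + 1 : ℝ) : ℂ) ^ (-z))
      (-(((2:ℝ):ℂ) ^ (-z) * ((2:ℝ):ℂ) ^ (-z) * hzeta z (q + 1 / 2))) := by
    refine (((hzeta_hasSum hq' hz).mul_left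
      (((2:ℝ):ℂ) ^ (-z) * ((2:ℝ):ℂ) ^ (-z))).neg).congr_fun fun m => ?_
    have h1 : (a + 2 * ((2 * m + 1 : ℕ) : ℝ) + 1 : ℝ) = 4 * ((m : ℝ) + (q + 1 / 2)) := by
      rw [hqdef]; push_cast; ring
    rw [pow_succ, pow_mul, neg_one_sq, one_pow, one_mul, h1, key _ (by positivity)]
    push_cast
    ring
  have hsum := HasSum.even_add_odd
    (f := fun n : ℕ => (-1 : ℂ) ^ n * ((a + 2 * n + 1 : ℝ) : ℂ) ^ (-z)) heven hodd
  convert hsum using 1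
  ring

/-- The power series expansion of `e^{-at} sinh t / cosh² t` (real version). -/
lemma real_hasSum (a : ℝ) {t : ℝ} (ht : 0 < t) :
    HasSum (fun n : ℕ => 2 * (-1 : ℝ) ^ n * (2 * n + 1) * Real.exp (-(a + 2 * n + 1) * t))
      (Real.exp (-a * t) * Real.sinh t / Real.cosh t ^ 2) := by
  set u : ℝ := Real.exp (-t) with hu
  have hu0 : 0 < u := Real.exp_pos _
  have hu1 : u < 1 := Real.exp_lt_one_iff.mpr (by linarith)
  have hnorm : ‖-(u ^ 2)‖ < 1 := by
    rw [norm_neg, Real.norm_eq_abs, _root_.abs_of_nonneg (by positivity)]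
    exact pow_lt_one₀ hu0.le hu1 two_ne_zero
  have h1 := hasSum_coe_mul_geometric_of_norm_lt_one hnorm
  have h2 := hasSum_geometric_of_norm_lt_one hnorm
  have h3 := ((h1.mul_left 2).add h2).mul_left (2 * Real.exp (-a * t) * u)
  have hexp : Real.exp t = u⁻¹ := by
    rw [hu, ← Real.exp_neg, neg_neg]
  have hden : (1 : ℝ) + u ^ 2 ≠ 0 := by positivity
  have hval : 2 * Real.exp (-a * t) * u *
      (2 * (-(u ^ 2) / (1 - -(u ^ 2)) ^ 2) + (1 - -(u ^ 2))⁻¹)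
      = Real.exp (-a * t) * Real.sinh t / Real.cosh t ^ 2 := by
    rw [Real.sinh_eq, Real.cosh_eq, hexp, ← hu]
    have h1u : (1 : ℝ) - -(u ^ 2) = 1 + u ^ 2 := by ring
    rw [h1u]
    field_simp
    ring
  rw [← hval]
  refine h3.congr_fun fun n => ?_
  have e1 : Real.exp (-(a + 2 * n + 1) * t) = Real.exp (-a * t) * u ^ (2 * n + 1) := by
    rw [hu, ← Real.exp_nat_mul, ← Real.exp_add]
    congr 1
    push_cast
    ring
  have e2 : (-(u ^ 2)) ^ n = (-1 : ℝ) ^ n * u ^ (2 * n) := by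
    rw [neg_pow, pow_mul]
  rw [e1, e2]
  ring

/-- Mellin transform formula, valid for `1 < re s`. -/
lemma mellin_eq {a : ℝ} (ha : 0 < a) {s : ℂ} (hs : 1 < s.re) :
    mellin (fun t : ℝ => ((Real.exp (-a * t) * Real.sinh t / Real.cosh t ^ 2 : ℝ) : ℂ)) (s + 1)
      = 2 ^ (-2 * s) * Complex.Gamma (s + 1) *
        (2 * (hzeta s (a / 4 + 1 / 4) - hzeta s (a / 4 + 1 / 4 + 1 / 2)) -
          (a / 2 : ℂ) * (hzeta (s + 1) (a / 4 + 1 / 4) - hzeta (s + 1) (a / 4 + 1 / 4 + 1 / 2))) := by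
  set p : ℕ → ℝ := fun n => a + 2 * n + 1 with hpdef
  have hppos : ∀ n : ℕ, 0 < p n := fun n => by rw [hpdef]; positivity
  set c : ℕ → ℂ := fun n => ((2 * (-1 : ℝ) ^ n * (2 * n + 1) : ℝ) : ℂ) with hcdef
  have hσ : 1 < s.re := hs
  have hs0 : 0 < (s + 1).re := by rw [Complex.add_re, Complex.one_re]; linarith
  -- main Mellin/Dirichlet step
  have hmel : HasSum (fun n : ℕ => Complex.Gamma (s + 1) * c n / ((p n : ℝ) : ℂ) ^ (s + 1))
      (mellin (fun t : ℝ => ((Real.exp (-a * t) * Real.sinh t / Real.cosh t ^ 2 : ℝ) : ℂ))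
        (s + 1)) := by
    refine hasSum_mellin (fun n => Or.inr (hppos n)) hs0 (fun t ht => ?_) ?_
    · -- pointwise has-sum
      have := (real_hasSum a (Set.mem_Ioi.mp ht)).mapL Complex.ofRealCLM
      refine this.congr_fun fun n => ?_
      simp only [Complex.ofRealCLM_apply, Complex.ofReal_mul, hcdef, hpdef]
    · -- summability of norms
      have hb : ∀ n : ℕ, ‖c n‖ / p n ^ (s + 1).re ≤ 2 * ((n + 1 : ℝ)) ^ (-s.re) := by
        intro n
        have hpn := hppos n
        have hnorm : ‖c n‖ = 2 * (2 * n + 1) := by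
          rw [hcdef]
          simp only [Complex.norm_real, Real.norm_eq_abs, _root_.abs_mul, _root_.abs_pow,
            _root_.abs_neg, _root_.abs_one, one_pow, mul_one]
          rw [_root_.abs_of_nonneg (by norm_num : (0:ℝ) ≤ 2),
            _root_.abs_of_nonneg (by positivity : (0:ℝ) ≤ 2 * (n:ℝ) + 1)]
        have hre : (s + 1).re = s.re + 1 := by rw [Complex.add_re, Complex.one_re]
        rw [hnorm, hre, Real.rpow_add hpn, Real.rpow_one]
        have step1 : 2 * (2 * (n : ℝ) + 1) / (p n ^ s.re * p n) ≤ 2 / p n ^ s.re := by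
          rw [div_le_div_iff₀ (by positivity) (by positivity)]
          have h1 : 2 * (n : ℝ) + 1 ≤ p n := by rw [hpdef]; simp; linarith
          have h2 : (0:ℝ) < p n ^ s.re := Real.rpow_pos_of_pos hpn _
          nlinarith [h2.le]
        refine step1.trans ?_
        have h3 : ((n:ℝ) + 1) ≤ p n := by rw [hpdef]; simp; linarith [Nat.cast_nonneg (α := ℝ) n]
        have h4 : ((n:ℝ) + 1) ^ s.re ≤ p n ^ s.re :=
          Real.rpow_le_rpow (by positivity) h3 (by linarith)
        rw [Real.rpow_neg (by positivity), div_eq_mul_inv]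
        gcongr
      refine Summable.of_nonneg_of_le (fun n => by positivity) hb ?_
      have hsum : Summable (fun n : ℕ => ((n : ℝ)) ^ (-s.re)) :=
        Real.summable_nat_rpow.mpr (by linarith)
      have hsum2 : Summable (fun n : ℕ => (((n + 1 : ℕ) : ℝ)) ^ (-s.re)) :=
        (summable_nat_add_iff 1).mpr hsum
      refine (hsum2.mul_left 2).congr fun n => ?_
      push_cast
      try ring
  -- rewrite the summand using the alternating series
  have hz1 : 1 < (s + 1).re := by rw [Complex.add_re, Complex.one_re]; linarith
  have hA := hasSum_alt ha hs
  have hB := hasSum_alt ha hz1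
  have hC := ((hA.mul_left 2).sub (hB.mul_left (2 * (a:ℂ)))).mul_left (Complex.Gamma (s + 1))
  have hfun : ∀ n : ℕ, Complex.Gamma (s + 1) * c n / ((p n : ℝ) : ℂ) ^ (s + 1)
      = Complex.Gamma (s + 1) *
        (2 * ((-1 : ℂ) ^ n * ((a + 2 * n + 1 : ℝ) : ℂ) ^ (-s)) -
          2 * a * ((-1 : ℂ) ^ n * ((a + 2 * n + 1 : ℝ) : ℂ) ^ (-(s + 1)))) := by
    intro n
    have hpn0 : ((p n : ℝ) : ℂ) ≠ 0 := Complex.ofReal_ne_zero.mpr (hppos n).ne'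
    have key : ((p n : ℝ) : ℂ) ^ (-s) = ((p n : ℝ) : ℂ) ^ (-(s + 1)) * ((p n : ℝ) : ℂ) := by
      rw [show (-s : ℂ) = -(s + 1) + 1 by ring, Complex.cpow_add _ _ hpn0, Complex.cpow_one]
    have hcval : c n = 2 * (-1 : ℂ) ^ n * (((p n : ℝ) : ℂ) - a) := by
      rw [hcdef, hpdef]
      push_cast
      ring
    rw [hcval, div_eq_mul_inv, ← Complex.cpow_neg]
    have hppn : ((a + 2 * n + 1 : ℝ) : ℂ) = ((p n : ℝ) : ℂ) := by rw [hpdef]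
    rw [hppn, key]
    ring
  have hC' : HasSum (fun n : ℕ => Complex.Gamma (s + 1) * c n / ((p n : ℝ) : ℂ) ^ (s + 1))
      (Complex.Gamma (s + 1) *
        (2 * (((2:ℝ):ℂ) ^ (-s) * ((2:ℝ):ℂ) ^ (-s) *
            (hzeta s (a / 4 + 1 / 4) - hzeta s (a / 4 + 1 / 4 + 1 / 2))) -
          2 * a * (((2:ℝ):ℂ) ^ (-(s+1)) * ((2:ℝ):ℂ) ^ (-(s+1)) *
            (hzeta (s+1) (a / 4 + 1 / 4) - hzeta (s+1) (a / 4 + 1 / 4 + 1 / 2))))) := by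
    refine hC.congr_fun fun n => ?_
    rw [hfun n]
  have := hmel.unique hC'
  rw [this]
  -- final algebra with powers of two
  have h2ne : ((2:ℝ):ℂ) ≠ 0 := by norm_num
  have h22 : ((2:ℝ):ℂ) = (2:ℂ) := by norm_num
  have hsq : (2 : ℂ) ^ (-2 * s) = ((2:ℝ):ℂ) ^ (-s) * ((2:ℝ):ℂ) ^ (-s) := by
    rw [show (-2 * s : ℂ) = -s + -s by ring, ← h22, Complex.cpow_add _ _ h2ne]
  have hshift : ((2:ℝ):ℂ) ^ (-(s+1)) = ((2:ℝ):ℂ) ^ (-s) * ((2:ℝ):ℂ) ^ (-1 : ℂ) := by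
    rw [← Complex.cpow_add _ _ h2ne]
    ring_nf
  have hinv : ((2:ℝ):ℂ) ^ (-1 : ℂ) = 1 / 2 := by
    rw [Complex.cpow_neg_one]
    norm_num
  rw [hsq, hshift, hinv]
  ring

/-- Differentiability of `z ↦ c^{-z}` for `c ≥ 0` on the right half-plane. -/
lemma diffAt_cpow_aux {c : ℝ} (hc : 0 ≤ c) {s : ℂ} (hs : 0 < s.re) :
    DifferentiableAt ℂ (fun z : ℂ => ((c : ℝ) : ℂ) ^ (-z)) s := by
  rcases eq_or_lt_of_le hc with h | h
  · have hev : (fun z : ℂ => ((c : ℝ) : ℂ) ^ (-z)) =ᶠ[nhds s] (fun _ => (0 : ℂ)) := by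
      filter_upwards [IsOpen.mem_nhds
        (isOpen_lt continuous_const Complex.continuous_re) hs] with z hz
      have hz0 : -z ≠ 0 := by
        simp only [ne_eq, neg_eq_zero]
        intro h0
        rw [h0] at hz
        simp at hz
      rw [← h, Complex.ofReal_zero, Complex.zero_cpow hz0]
    exact (differentiableAt_const (0 : ℂ)).congr_of_eventuallyEq hev
  · exact DifferentiableAt.const_cpow differentiableAt_id.neg
      (Or.inl (Complex.ofReal_ne_zero.mpr h.ne'))

/-- Differentiability of the difference of `hzeta`s on the right half-plane. -/
lemma diffAt_hzeta_sub (q q' : ℝ) {s : ℂ} (hs : 0 < s.re) :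
    DifferentiableAt ℂ (fun z => hzeta z q - hzeta z q') s := by
  have h1 : (fun z => hzeta z q - hzeta z q') = fun z =>
      (HurwitzZeta.hurwitzZeta (↑(Int.fract q) : UnitAddCircle) z -
        HurwitzZeta.hurwitzZeta (↑(Int.fract q') : UnitAddCircle) z)
      - (∑ k ∈ Finset.range ⌊q⌋₊, (((Int.fract q : ℝ) : ℂ) + (k : ℂ)) ^ (-z))
      + ∑ k ∈ Finset.range ⌊q'⌋₊, (((Int.fract q' : ℝ) : ℂ) + (k : ℂ)) ^ (-z) := by
    funext z
    simp only [hzeta]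
    ring
  rw [h1]
  have hterm : ∀ (x : ℝ), 0 ≤ x → ∀ (k : ℕ),
      DifferentiableAt ℂ (fun z : ℂ => ((x : ℝ) : ℂ) + (k : ℂ)) s → True := fun _ _ _ _ => trivial
  refine DifferentiableAt.add (DifferentiableAt.sub ?_ ?_) ?_
  · exact HurwitzZeta.differentiable_hurwitzZeta_sub_hurwitzZeta _ _ s
  · refine DifferentiableAt.fun_sum fun k _ => ?_
    have hx : (((Int.fract q : ℝ) : ℂ) + (k : ℂ)) = (((Int.fract q + k : ℝ)) : ℂ) := by
      push_cast; ring
    simp only [hx]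
    exact diffAt_cpow_aux (by have := Int.fract_nonneg q; positivity) hs
  · refine DifferentiableAt.fun_sum fun k _ => ?_
    have hx : (((Int.fract q' : ℝ) : ℂ) + (k : ℂ)) = (((Int.fract q' + k : ℝ)) : ℂ) := by
      push_cast; ring
    simp only [hx]
    exact diffAt_cpow_aux (by have := Int.fract_nonneg q'; positivity) hs

/-- The full identity, for complex `s` with `0 < re s`, via analytic continuation. -/
lemma main_complex {a : ℝ} (ha : 0 < a) :
    Set.EqOn
      (fun s : ℂ =>
        mellin (fun t : ℝ => ((Real.exp (-a * t) * Real.sinh t / Real.cosh t ^ 2 : ℝ) : ℂ)) (s + 1))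
      (fun s : ℂ => 2 ^ (-2 * s) * Complex.Gamma (s + 1) *
        (2 * (hzeta s (a / 4 + 1 / 4) - hzeta s (a / 4 + 1 / 4 + 1 / 2)) -
          (a / 2 : ℂ) * (hzeta (s + 1) (a / 4 + 1 / 4) - hzeta (s + 1) (a / 4 + 1 / 4 + 1 / 2))))
      {z : ℂ | 0 < z.re} := by
  set g : ℝ → ℂ := fun t : ℝ => ((Real.exp (-a * t) * Real.sinh t / Real.cosh t ^ 2 : ℝ) : ℂ)
    with hgdef
  -- bound on g
  have hgbound : ∀ t : ℝ, 0 ≤ t → ‖g t‖ ≤ Real.exp (-a * t) := by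
    intro t htpos
    have hch := Real.cosh_pos t
    have hsh : 0 ≤ Real.sinh t := by
      rw [Real.sinh_eq]
      have := Real.exp_le_exp.mpr (by linarith : -t ≤ t)
      linarith
    have hsc : Real.sinh t ≤ Real.cosh t ^ 2 := by
      have h1 := (Real.sinh_lt_cosh t).le
      have h2 := Real.one_le_cosh t
      nlinarith
    have hval : (0:ℝ) ≤ Real.exp (-a * t) * Real.sinh t / Real.cosh t ^ 2 := by positivity
    simp only [hgdef, Complex.norm_real, Real.norm_eq_abs]
    rw [_root_.abs_of_nonneg hval, div_le_iff₀ (by positivity)]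
    nlinarith [mul_nonneg (Real.exp_pos (-a * t)).le (sub_nonneg.mpr hsc)]
  have hgcont : Continuous g := by
    refine Complex.continuous_ofReal.comp ?_
    exact ((Real.continuous_exp.comp (continuous_const.mul continuous_id)).mul
      Real.continuous_sinh).div (Real.continuous_cosh.pow 2)
      (fun x => by positivity)
  have hgloc : LocallyIntegrableOn g (Set.Ioi (0:ℝ)) :=
    hgcont.continuousOn.locallyIntegrableOn measurableSet_Ioi
  have hgtop : g =O[atTop] fun t => Real.exp (-a * t) := by
    refine IsBigO.of_bound 1 ?_
    filter_upwards [eventually_ge_atTop (0:ℝ)] with t ht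
    rw [one_mul, Real.norm_eq_abs, abs_of_pos (Real.exp_pos _)]
    exact hgbound t ht
  have hgbot : g =O[nhdsWithin 0 (Set.Ioi 0)] fun x : ℝ => x ^ (-(0:ℝ)) := by
    refine IsBigO.of_bound 1 ?_
    filter_upwards [eventually_mem_nhdsWithin] with t ht
    have ht0 : (0:ℝ) < t := ht
    rw [neg_zero, Real.rpow_zero, norm_one, one_mul]
    refine (hgbound t ht0.le).trans ?_
    exact Real.exp_le_one_iff.mpr (by nlinarith)
  have hopen : IsOpen {z : ℂ | 0 < z.re} := isOpen_lt continuous_const Complex.continuous_re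
  -- analyticity of LHS
  have hF : AnalyticOnNhd ℂ (fun s : ℂ => mellin g (s + 1)) {z : ℂ | 0 < z.re} := by
    refine DifferentiableOn.analyticOnNhd (fun z hz => ?_) hopen
    have hz' : (0:ℝ) < (z + 1).re := by
      rw [Complex.add_re, Complex.one_re]
      have : 0 < z.re := hz
      linarith
    have hd : DifferentiableAt ℂ (mellin g) (z + 1) :=
      mellin_differentiableAt_of_isBigO_rpow_exp ha hgloc hgtop hgbot hz'
    exact (hd.comp z (differentiableAt_id.add_const 1)).differentiableWithinAt
  -- analyticity of RHS
  have hR : AnalyticOnNhd ℂ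
      (fun s : ℂ => 2 ^ (-2 * s) * Complex.Gamma (s + 1) *
        (2 * (hzeta s (a / 4 + 1 / 4) - hzeta s (a / 4 + 1 / 4 + 1 / 2)) -
          (a / 2 : ℂ) * (hzeta (s + 1) (a / 4 + 1 / 4) - hzeta (s + 1) (a / 4 + 1 / 4 + 1 / 2))))
      {z : ℂ | 0 < z.re} := by
    refine DifferentiableOn.analyticOnNhd (fun z hz => DifferentiableAt.differentiableWithinAt ?_) hopen
    have hzre : 0 < z.re := hz
    have h1 : DifferentiableAt ℂ (fun s : ℂ => (2:ℂ) ^ (-2 * s)) z := by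
      refine DifferentiableAt.const_cpow ?_ (Or.inl two_ne_zero)
      exact (differentiableAt_id.const_mul (-2))
    have h2 : DifferentiableAt ℂ (fun s : ℂ => Complex.Gamma (s + 1)) z := by
      refine (Complex.differentiableAt_Gamma (z + 1) fun m => ?_).comp z
        (differentiableAt_id.add_const 1)
      intro hcon
      have := congrArg Complex.re hcon
      simp only [Complex.add_re, Complex.one_re, Complex.neg_re, Complex.natCast_re] at this
      have hm : (0:ℝ) ≤ (m:ℝ) := Nat.cast_nonneg m
      linarith
    have h3 : DifferentiableAt ℂ
        (fun s : ℂ => hzeta s (a / 4 + 1 / 4) - hzeta s (a / 4 + 1 / 4 + 1 / 2)) z :=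
      diffAt_hzeta_sub _ _ hzre
    have h4 : DifferentiableAt ℂ
        (fun s : ℂ => hzeta (s + 1) (a / 4 + 1 / 4) - hzeta (s + 1) (a / 4 + 1 / 4 + 1 / 2)) z := by
      have : (0:ℝ) < (z + 1).re := by
        rw [Complex.add_re, Complex.one_re]; linarith
      exact (diffAt_hzeta_sub (a / 4 + 1 / 4) (a / 4 + 1 / 4 + 1 / 2) this).comp z
        (differentiableAt_id.add_const 1)
    exact (h1.mul h2).mul ((h3.const_mul 2).sub (h4.const_mul _))
  -- identity theorem
  have hpre : IsPreconnected {z : ℂ | 0 < z.re} := (convex_halfSpace_re_gt 0).isPreconnected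
  have h2mem : (2:ℂ) ∈ {z : ℂ | 0 < z.re} := by
    simp only [Set.mem_setOf_eq]
    norm_num
  have hev : (fun s : ℂ => mellin g (s + 1)) =ᶠ[nhds 2]
      (fun s : ℂ => 2 ^ (-2 * s) * Complex.Gamma (s + 1) *
        (2 * (hzeta s (a / 4 + 1 / 4) - hzeta s (a / 4 + 1 / 4 + 1 / 2)) -
          (a / 2 : ℂ) * (hzeta (s + 1) (a / 4 + 1 / 4) - hzeta (s + 1) (a / 4 + 1 / 4 + 1 / 2)))) := by
    have hmem2 : (2:ℂ) ∈ {z : ℂ | 1 < z.re} := by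
      simp only [Set.mem_setOf_eq]
      norm_num
    filter_upwards [IsOpen.mem_nhds (isOpen_lt continuous_const Complex.continuous_re) hmem2]
      with z hz
    exact mellin_eq ha hz
  exact AnalyticOnNhd.eqOn_of_preconnected_of_eventuallyEq hF hR hpre h2mem hev

end HZAux

/-- `∫_0^∞ e^{-aw} w^s sinh w / cosh² w dw
  = 2^{-2s} Γ(s+1) (2(ζ(s,q)-ζ(s,q+1/2)) - (a/2)(ζ(s+1,q)-ζ(s+1,q+1/2)))`
with `q = a/4 + 1/4`, for real `s > 0`, `a > 0`. -/
theorem integral_sinh_div_cosh_sq (s a : ℝ) (hs : 0 < s) (ha : 0 < a) :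
    (↑(∫ w in Set.Ioi (0 : ℝ),
        Real.exp (-a * w) * w ^ s * Real.sinh w / (Real.cosh w) ^ 2) : ℂ) =
      2 ^ (-2 * (s : ℂ)) * Complex.Gamma (s + 1) *
        (2 * (hzeta s (a / 4 + 1 / 4) - hzeta s (a / 4 + 1 / 4 + 1 / 2)) -
          (a / 2 : ℂ) * (hzeta (s + 1) (a / 4 + 1 / 4) - hzeta (s + 1) (a / 4 + 1 / 4 + 1 / 2))) := by
  have hmem : (s : ℂ) ∈ {z : ℂ | 0 < z.re} := by
    simp only [Set.mem_setOf_eq, Complex.ofReal_re]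
    exact hs
  have key := HZAux.main_complex ha hmem
  simp only at key
  rw [← key]
  -- convert the real integral to the Mellin transform
  have hcoe : (↑(∫ w in Set.Ioi (0 : ℝ),
      Real.exp (-a * w) * w ^ s * Real.sinh w / (Real.cosh w) ^ 2) : ℂ)
      = ∫ w in Set.Ioi (0 : ℝ),
        ((Real.exp (-a * w) * w ^ s * Real.sinh w / (Real.cosh w) ^ 2 : ℝ) : ℂ) :=
    (integral_ofReal (𝕜 := ℂ)).symm
  rw [hcoe, mellin]
  refine setIntegral_congr_fun measurableSet_Ioi fun w hw => ?_
  have hw0 : (0:ℝ) < w := hw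
  have hcast : ((w : ℂ)) ^ ((s:ℂ) + 1 - 1) = ((w ^ s : ℝ) : ℂ) := by
    rw [add_sub_cancel_right, ← Complex.ofReal_cpow hw0.le]
  rw [smul_eq_mul, hcast]
  push_cast
  ring
end

section
/- For real s > 0 and real a > 0, ∫_0^∞ w^s tanh(w) e^(-a w) dw = 2^(-2-2s) Γ(1+s) (ζ(1+s, 1+a/4) + ζ(1+s, a/4) - 2 ζ(1+s, 1/2 + a/4)). -/
open MeasureTheory

private lemma mellin_exp {t c : ℝ} (ht : -1 < t) (hc : 0 < c) :
    ∫ w in Set.Ioi (0:ℝ), w ^ t * Real.exp (-(c * w)) = (1/c) ^ (t+1) * Real.Gamma (t+1) := by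
  have h := Real.integral_rpow_mul_exp_neg_mul_Ioi (a := t+1) (r := c) (by linarith) hc
  simpa using h

private lemma mellin_int {t c : ℝ} (ht : -1 < t) (hc : 0 < c) :
    IntegrableOn (fun w : ℝ => w ^ t * Real.exp (-(c * w))) (Set.Ioi 0) := by
  have h := integrableOn_rpow_mul_exp_neg_mul_rpow (p := 1) ht one_pos hc
  simpa [Real.rpow_one, neg_mul] using h

private lemma hzeta_hasSum {σ : ℂ} (hσ : 1 < σ.re) {q : ℝ} (hq : 0 < q) :
    HasSum (fun n : ℕ => ((((n : ℝ) + q : ℝ)) : ℂ) ^ (-σ)) (hzeta σ q) := by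
  have hx : Int.fract q ∈ Set.Icc (0:ℝ) 1 :=
    ⟨Int.fract_nonneg q, (Int.fract_lt_one q).le⟩
  have h0 := HurwitzZeta.hasSum_hurwitzZeta_of_one_lt_re hx hσ
  have hsum := (hasSum_nat_add_iff'
      (f := fun n : ℕ => 1 / ((n : ℂ) + (Int.fract q : ℝ)) ^ σ) ⌊q⌋₊).mpr h0
  have hqq : ((⌊q⌋₊ : ℝ)) + Int.fract q = q := by
    rw [natCast_floor_eq_intCast_floor hq.le]
    exact Int.floor_add_fract q
  have hqqC : ((⌊q⌋₊ : ℕ) : ℂ) + ((Int.fract q : ℝ) : ℂ) = (q : ℂ) := by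
    exact_mod_cast congrArg (fun x : ℝ => (x : ℂ)) hqq
  rw [hzeta]
  convert hsum using 1
  · rfl
  · funext n
    rw [one_div, ← Complex.cpow_neg]
    congr 1
    push_cast
    push_cast at hqqC
    linear_combination (-1 : ℂ) * hqqC
  · congr 1
    apply Finset.sum_congr rfl
    intro i _
    rw [one_div, ← Complex.cpow_neg, add_comm]

private lemma tanh_hasSum {w : ℝ} (hw : 0 < w) :
    HasSum (fun n : ℕ => 2 * (-1:ℝ)^(n+1) * Real.exp (-(2*((n:ℝ)+1)) * w))
      (Real.tanh w - 1) := by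
  set x := Real.exp (-(2*w)) with hxdef
  have hx0 : 0 < x := Real.exp_pos _
  have hx1 : x < 1 := by
    rw [hxdef, Real.exp_lt_one_iff]; linarith
  have hgeo : HasSum (fun n : ℕ => (-x)^n) (1 - (-x))⁻¹ :=
    hasSum_geometric_of_norm_lt_one
      (by rw [norm_neg, Real.norm_eq_abs, abs_of_pos hx0]; exact hx1)
  have h2 := hgeo.mul_left (-2*x)
  convert h2 using 1
  · rfl
  · funext n
    have hexp : Real.exp (-(2*((n:ℝ)+1)) * w) = x^(n+1) := by
      rw [hxdef, ← Real.exp_nat_mul]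
      congr 1
      push_cast
      ring
    rw [hexp, neg_pow, pow_succ]
    ring
  · set u := Real.exp w with hu
    set v := Real.exp (-w) with hv
    have hu0 : 0 < u := Real.exp_pos _
    have hv0 : 0 < v := Real.exp_pos _
    have huv : u * v = 1 := by rw [hu, hv, ← Real.exp_add]; simp
    have hx2 : x = v * v := by rw [hxdef, hv, ← Real.exp_add]; ring_nf
    rw [Real.tanh_eq_sinh_div_cosh, Real.sinh_eq, Real.cosh_eq, ← hu, ← hv, hx2]
    have hden : u + v ≠ 0 := by positivity
    have hden2 : (1 : ℝ) - -(v*v) ≠ 0 := by nlinarith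
    field_simp
    have h1 : (1:ℝ) - -v^2 ≠ 0 := by nlinarith
    field_simp
    nlinarith [huv]

/-- `∫_0^∞ w^s tanh w e^{-aw} dw
  = 2^{-2-2s} Γ(1+s) (ζ(1+s,1+a/4) + ζ(1+s,a/4) - 2 ζ(1+s,1/2+a/4))`
for real `s > 0`, `a > 0`. -/
theorem integral_tanh_exp (s a : ℝ) (hs : 0 < s) (ha : 0 < a) :
    (↑(∫ w in Set.Ioi (0 : ℝ), w ^ s * Real.tanh w * Real.exp (-a * w)) : ℂ) =
      2 ^ (-2 - 2 * (s : ℂ)) * Complex.Gamma (1 + s) *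
        (hzeta (1 + s) (1 + a / 4) + hzeta (1 + s) (a / 4) -
          2 * hzeta (1 + s) (1 / 2 + a / 4)) := by
  have hs' : (-1 : ℝ) < s := by linarith
  have hs1 : (1:ℝ) < s + 1 := by linarith
  set σ : ℂ := 1 + (s:ℂ) with hσ
  have hσre : 1 < σ.re := by
    simp only [hσ, Complex.add_re, Complex.one_re, Complex.ofReal_re]; linarith
  have hσs : σ = ((s+1 : ℝ) : ℂ) := by rw [hσ]; push_cast; ring
  have hG : Complex.Gamma σ = ((Real.Gamma (s+1) : ℝ) : ℂ) := by
    rw [hσs, Complex.Gamma_ofReal]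
  have hcast : ∀ c : ℝ, 0 < c → (((1/c)^(s+1) : ℝ) : ℂ) = ((c : ℂ))^(-σ) := by
    intro c hc
    rw [one_div, Real.inv_rpow hc.le, ← Real.rpow_neg hc.le, Complex.ofReal_cpow hc.le]
    congr 1
    rw [hσs]; push_cast; ring
  -- the real-side series of integrals
  set c : ℕ → ℝ := fun n => a + 2*((n:ℝ)+1) with hcdef
  have hc : ∀ n, 0 < c n := fun n => by positivity
  set F : ℕ → ℝ → ℝ := fun n w =>
    (w ^ s * Real.exp (-a * w)) * (2 * (-1:ℝ)^(n+1) * Real.exp (-(2*((n:ℝ)+1)) * w))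
    with hFdef
  have hFeq : ∀ n, F n = fun w => (2*(-1:ℝ)^(n+1)) * (w ^ s * Real.exp (-(c n * w))) := by
    intro n; funext w
    rw [hFdef, hcdef]
    simp only
    rw [show -((a + 2*((n:ℝ)+1)) * w) = -a*w + (-(2*((n:ℝ)+1)) * w) by ring, Real.exp_add]
    ring
  have hFint : ∀ n, Integrable (F n) (volume.restrict (Set.Ioi 0)) := by
    intro n; rw [hFeq n]
    exact (mellin_int hs' (hc n)).const_mul _
  have hFval : ∀ n, ∫ w in Set.Ioi (0:ℝ), F n w
      = 2*(-1:ℝ)^(n+1) * ((1/(c n))^(s+1) * Real.Gamma (s+1)) := by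
    intro n
    rw [hFeq n]
    simp only
    rw [integral_const_mul, mellin_exp hs' (hc n)]
  have hFnorm : ∀ n, ∫ w in Set.Ioi (0:ℝ), ‖F n w‖
      = 2 * ((1/(c n))^(s+1) * Real.Gamma (s+1)) := by
    intro n
    rw [hFeq n]
    have heq : ∀ w ∈ Set.Ioi (0:ℝ),
        ‖(2*(-1:ℝ)^(n+1)) * (w ^ s * Real.exp (-(c n * w)))‖
          = 2 * (w ^ s * Real.exp (-(c n * w))) := by
      intro w hw
      have hw0 : (0:ℝ) < w := hw
      rw [Real.norm_eq_abs, abs_mul]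
      rw [abs_of_nonneg (mul_nonneg (Real.rpow_nonneg hw0.le s) (Real.exp_nonneg _))]
      congr 1
      rw [abs_mul, abs_pow, abs_neg, abs_one, one_pow]
      norm_num
    rw [MeasureTheory.setIntegral_congr_fun measurableSet_Ioi heq,
      integral_const_mul, mellin_exp hs' (hc n)]
  have hFsum : Summable (fun n => ∫ w in Set.Ioi (0:ℝ), ‖F n w‖) := by
    simp only [hFnorm]
    apply Summable.mul_left
    apply Summable.mul_right
    have hbase : Summable (fun n : ℕ => (1/((n:ℝ)+1))^(s+1)) := by
      have h0 : Summable (fun n : ℕ => 1/((n:ℝ))^(s+1)) :=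
        Real.summable_one_div_nat_rpow.2 hs1
      have h1 := (summable_nat_add_iff 1).2 h0
      apply h1.congr
      intro n
      push_cast
      rw [one_div, one_div, Real.inv_rpow (by positivity)]
    have h2 : Summable (fun n : ℕ => (1/(2*((n:ℝ)+1)))^(s+1)) := by
      have := hbase.mul_left ((1/2 : ℝ)^(s+1))
      apply this.congr
      intro n
      rw [← Real.mul_rpow (by norm_num) (by positivity), div_mul_div_comm, one_mul]
    apply Summable.of_nonneg_of_le (fun n => by positivity) _ h2
    intro n
    apply Real.rpow_le_rpow (by positivity) _ (by linarith)
    apply div_le_div_of_nonneg_left (by norm_num) (by positivity)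
    simp only [hcdef]
    linarith [Nat.cast_nonneg (α := ℝ) n]
  have key := hasSum_integral_of_summable_integral_norm hFint hFsum
  -- identify the integral of the tsum
  have hpt : ∀ w ∈ Set.Ioi (0:ℝ), ∑' n, F n w
      = w ^ s * Real.tanh w * Real.exp (-a * w) - w ^ s * Real.exp (-a * w) := by
    intro w hw
    have hw0 : (0:ℝ) < w := hw
    have h := ((tanh_hasSum hw0).mul_left (w ^ s * Real.exp (-a * w))).tsum_eq
    rw [hFdef]
    simp only at h ⊢
    rw [h]; ring
  rw [MeasureTheory.setIntegral_congr_fun measurableSet_Ioi hpt] at key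
  -- integrability of the full integrand
  have hgint : IntegrableOn (fun w : ℝ => w ^ s * Real.exp (-a * w)) (Set.Ioi 0) := by
    have h := mellin_int hs' ha
    apply h.congr_fun _ measurableSet_Ioi
    intro w _; simp only [neg_mul]
  have htanh_bd : ∀ w : ℝ, |Real.tanh w| ≤ 1 := by
    intro w
    rw [Real.tanh_eq_sinh_div_cosh, Real.sinh_eq, Real.cosh_eq, abs_div]
    rw [abs_of_pos (by positivity : (0:ℝ) < (Real.exp w + Real.exp (-w))/2)]
    rw [div_le_one (by positivity)]
    rw [abs_div, abs_of_pos (by norm_num : (0:ℝ) < 2)]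
    apply div_le_div_of_nonneg_right _ (by norm_num)
    rw [abs_sub_le_iff]
    constructor <;> nlinarith [Real.exp_pos w, Real.exp_pos (-w)]
  have hfint : IntegrableOn (fun w : ℝ => w ^ s * Real.tanh w * Real.exp (-a * w))
      (Set.Ioi 0) := by
    apply Integrable.mono' hgint
    · apply ContinuousOn.aestronglyMeasurable _ measurableSet_Ioi
      apply ContinuousOn.mul
      apply ContinuousOn.mul
      · intro w hw
        exact (Real.continuousAt_rpow_const w s (Or.inl (ne_of_gt hw))).continuousWithinAt
      · have hct : Continuous Real.tanh := by
          have he : Real.tanh = fun x => Real.sinh x / Real.cosh x :=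
            funext fun x => Real.tanh_eq_sinh_div_cosh x
          rw [he]
          exact Real.continuous_sinh.div Real.continuous_cosh fun x => (Real.cosh_pos x).ne'
        exact hct.continuousOn
      · exact (Real.continuous_exp.comp (continuous_const.mul continuous_id)).continuousOn
    · filter_upwards [ae_restrict_mem measurableSet_Ioi] with w hw
      have hw0 : (0:ℝ) < w := hw
      rw [Real.norm_eq_abs, abs_mul, abs_mul]
      rw [abs_of_nonneg (Real.rpow_nonneg hw0.le s), abs_of_nonneg (Real.exp_nonneg _)]
      have h1 := htanh_bd w
      nlinarith [Real.rpow_nonneg hw0.le s, Real.exp_nonneg (-a*w),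
        mul_nonneg (Real.rpow_nonneg hw0.le s) (Real.exp_nonneg (-a*w))]
  rw [MeasureTheory.integral_sub hfint hgint] at key
  have hgval : ∫ w in Set.Ioi (0:ℝ), w ^ s * Real.exp (-a * w)
      = (1/a)^(s+1) * Real.Gamma (s+1) := by
    rw [← mellin_exp hs' ha]
    apply MeasureTheory.setIntegral_congr_fun measurableSet_Ioi
    intro w _; simp only [neg_mul]
  rw [hgval] at key
  simp only [hFval] at key
  -- cast to ℂ
  have keyC := (Complex.hasSum_ofReal).mpr key
  set I : ℝ := ∫ w in Set.Ioi (0:ℝ), w ^ s * Real.tanh w * Real.exp (-a * w) with hI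
  -- the complex series
  set φ : ℕ → ℂ := fun n =>
    2 * (-1:ℂ)^(n+1) * Complex.Gamma σ * ((2*(n:ℝ)+2+a : ℝ) : ℂ)^(-σ) with hφ
  have hbase : ∀ n : ℕ, ((c n : ℝ) : ℂ) = ((2*(n:ℝ)+2+a : ℝ) : ℂ) :=
    fun n => congrArg Complex.ofReal (by simp only [hcdef]; ring)
  have hL : HasSum φ ((I : ℂ) - Complex.Gamma σ * ((a:ℝ) : ℂ)^(-σ)) := by
    convert keyC using 1
    · funext n
      rw [hφ]
      simp only
      rw [← hbase n, Complex.ofReal_mul, Complex.ofReal_mul, Complex.ofReal_mul,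
        hcast _ (hc n), hG]
      push_cast
      ring
    · rw [Complex.ofReal_sub, Complex.ofReal_mul, hcast _ ha, hG]
      ring
  -- the Hurwitz-zeta side
  have h4 : ∀ x : ℝ, 0 ≤ x → (4:ℂ)^(-σ) * ((x : ℝ) : ℂ)^(-σ) = (((4*x : ℝ)) : ℂ)^(-σ) := by
    intro x hx
    rw [Complex.ofReal_mul, Complex.mul_cpow_ofReal_nonneg (by norm_num) hx]
    norm_num
  have H1 : HasSum (fun n : ℕ => ((4*(n:ℝ)+4+a : ℝ) : ℂ)^(-σ))
      ((4:ℂ)^(-σ) * hzeta σ (1+a/4)) := by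
    have h := (hzeta_hasSum hσre (by linarith : (0:ℝ) < 1+a/4)).mul_left ((4:ℂ)^(-σ))
    convert h using 1
    · rfl
    funext n
    rw [h4 _ (by positivity)]
    rw [show (4*((n:ℝ)+(1+a/4))) = 4*(n:ℝ)+4+a by ring]
  have H2 : HasSum (fun n : ℕ => ((4*(n:ℝ)+a : ℝ) : ℂ)^(-σ))
      ((4:ℂ)^(-σ) * hzeta σ (a/4)) := by
    have h := (hzeta_hasSum hσre (by linarith : (0:ℝ) < a/4)).mul_left ((4:ℂ)^(-σ))
    convert h using 1
    · rfl
    funext n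
    rw [h4 _ (by positivity)]
    rw [show (4*((n:ℝ)+a/4)) = 4*(n:ℝ)+a by ring]
  have H3 : HasSum (fun n : ℕ => ((4*(n:ℝ)+2+a : ℝ) : ℂ)^(-σ))
      ((4:ℂ)^(-σ) * hzeta σ (1/2+a/4)) := by
    have h := (hzeta_hasSum hσre (by linarith : (0:ℝ) < 1/2+a/4)).mul_left ((4:ℂ)^(-σ))
    convert h using 1
    · rfl
    funext n
    rw [h4 _ (by positivity)]
    rw [show (4*((n:ℝ)+(1/2+a/4))) = 4*(n:ℝ)+2+a by ring]
  -- ζ(σ, a/4) relation: Z2 = ψ a + Z1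
  have hZ2 : (4:ℂ)^(-σ) * hzeta σ (a/4) - ((a:ℝ) : ℂ)^(-σ) = (4:ℂ)^(-σ) * hzeta σ (1+a/4) := by
    have h := (hasSum_nat_add_iff'
        (f := fun n : ℕ => ((4*(n:ℝ)+a : ℝ) : ℂ)^(-σ)) 1).mpr H2
    have h' : HasSum (fun n : ℕ => ((4*(n:ℝ)+4+a : ℝ) : ℂ)^(-σ))
        ((4:ℂ)^(-σ) * hzeta σ (a/4) - ((a:ℝ) : ℂ)^(-σ)) := by
      convert h using 1
      · rfl
      · funext n
        rw [show (4*(n:ℝ)+4+a) = 4*((n+1:ℕ):ℝ)+a by push_cast; ring]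
      · rw [Finset.sum_range_one]
        norm_num
    exact h'.unique H1
  -- the alternating series
  set Fc : ℕ → ℂ := fun n => (-1:ℂ)^(n+1) * ((2*(n:ℝ)+2+a : ℝ) : ℂ)^(-σ) with hFc
  have heven : HasSum (fun k : ℕ => Fc (2*k)) (-((4:ℂ)^(-σ) * hzeta σ (1/2+a/4))) := by
    convert H3.neg using 1
    · rfl
    funext k
    rw [hFc]
    simp only
    rw [show ((2*k : ℕ) : ℝ) = 2*(k:ℝ) by push_cast; ring]
    rw [show (2*(2*(k:ℝ))+2+a) = 4*(k:ℝ)+2+a by ring]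
    rw [pow_succ, (Even.neg_one_pow ⟨k, by ring⟩ : (-1:ℂ)^(2*k) = 1)]
    ring
  have hodd : HasSum (fun k : ℕ => Fc (2*k+1)) ((4:ℂ)^(-σ) * hzeta σ (1+a/4)) := by
    convert H1 using 1
    funext k
    rw [hFc]
    simp only
    rw [show ((2*k+1 : ℕ) : ℝ) = 2*(k:ℝ)+1 by push_cast; ring]
    rw [show (2*(2*(k:ℝ)+1)+2+a) = 4*(k:ℝ)+4+a by ring]
    rw [show (2*k+1+1) = 2*(k+1) by ring, (Even.neg_one_pow ⟨k+1, by ring⟩ : (-1:ℂ)^(2*(k+1)) = 1)]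
    ring
  have hFsumC := heven.even_add_odd hodd
  have hR : HasSum φ (2 * Complex.Gamma σ *
      (-((4:ℂ)^(-σ) * hzeta σ (1/2+a/4)) + (4:ℂ)^(-σ) * hzeta σ (1+a/4))) := by
    have h := hFsumC.mul_left (2 * Complex.Gamma σ)
    convert h using 1
    · rfl
    funext n
    rw [hφ, hFc]
    ring
  have huniq := hL.unique hR
  have h24 : (2:ℂ) ^ (-2 - 2*(s:ℂ)) = (4:ℂ)^(-σ) := by
    rw [show (-2 - 2*(s:ℂ)) = -σ + -σ by rw [hσ]; ring,
      Complex.cpow_add _ _ two_ne_zero]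
    rw [show (4:ℂ) = ((2:ℝ):ℂ)*((2:ℝ):ℂ) by norm_num,
      Complex.mul_cpow_ofReal_nonneg (by norm_num) (by norm_num)]
    norm_num
  rw [h24]
  linear_combination huniq - Complex.Gamma σ * hZ2
end

section
/- The digamma function satisfies ψ(7/8) - ψ(3/8) = √2 (π - 2 log(√2 + 1)). -/
open Real Set Filter Topology

/-- The digamma function, the logarithmic derivative of the Gamma function. -/
noncomputable def digamma (x : ℝ) : ℝ := deriv (fun y : ℝ => Real.log (Real.Gamma y)) x

private lemma diff_logGamma {x : ℝ} (hx : 0 < x) :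
    DifferentiableAt ℝ (fun y : ℝ => Real.log (Real.Gamma y)) x := by
  refine ((Real.differentiableAt_Gamma ?_).log (Real.Gamma_ne_zero ?_)) <;>
    exact fun m => by have := Nat.cast_nonneg (α := ℝ) m; intro h; linarith

private lemma digamma_rec {x : ℝ} (hx : 0 < x) : digamma (x + 1) = digamma x + 1 / x := by
  unfold digamma
  rw [← deriv_comp_add_const, one_div, ← Real.deriv_log,
    ← deriv_add (diff_logGamma hx) (Real.differentiableAt_log hx.ne')]
  apply Filter.EventuallyEq.deriv_eq
  filter_upwards [eventually_gt_nhds hx] with y hy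
  simp only [Pi.add_apply, Real.Gamma_add_one hy.ne',
    Real.log_mul hy.ne' (Real.Gamma_pos_of_pos hy).ne', add_comm]

private lemma digamma_rec_nat {x : ℝ} (hx : 0 < x) (n : ℕ) :
    digamma (x + n) = digamma x + ∑ m ∈ Finset.range n, 1 / (x + m) := by
  induction n with
  | zero => simp
  | succ n ih =>
    have h1 : x + (n + 1 : ℕ) = (x + n) + 1 := by push_cast; ring
    rw [h1, digamma_rec (by positivity), ih, Finset.sum_range_succ]
    ring

private lemma digamma_le_log {x : ℝ} (hx : 1 < x) : digamma x ≤ Real.log x := by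
  have hx0 : (0:ℝ) < x := by linarith
  have := Real.convexOn_log_Gamma.deriv_le_slope (mem_Ioi.mpr hx0)
    (mem_Ioi.mpr (by linarith : (0:ℝ) < x + 1)) (by linarith) (diff_logGamma hx0)
  refine this.trans (le_of_eq ?_)
  rw [slope_def_field, Function.comp_apply, Function.comp_apply, show x + 1 - x = (1:ℝ) by ring, div_one,
    Real.Gamma_add_one hx0.ne', Real.log_mul hx0.ne' (Real.Gamma_pos_of_pos hx0).ne',
    add_sub_cancel_right]

private lemma log_le_digamma {x : ℝ} (hx : 1 < x) : Real.log (x - 1) ≤ digamma x := by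
  have hx1 : (0:ℝ) < x - 1 := by linarith
  have := Real.convexOn_log_Gamma.slope_le_deriv (mem_Ioi.mpr hx1)
    (mem_Ioi.mpr (by linarith : (0:ℝ) < x)) (by linarith) (diff_logGamma (by linarith))
  refine le_trans (le_of_eq ?_) this
  rw [slope_def_field, Function.comp_apply, Function.comp_apply, show x - (x - 1) = (1:ℝ) by ring, div_one,
    show x = (x - 1) + 1 by ring, Real.Gamma_add_one hx1.ne',
    Real.log_mul hx1.ne' (Real.Gamma_pos_of_pos hx1).ne']
  simp

private lemma tendsto_log_add_sub_log_add (c d : ℝ) :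
    Tendsto (fun n : ℕ => Real.log (n + c) - Real.log (n + d)) atTop (𝓝 0) := by
  have h0 : Tendsto (fun n : ℕ => (c - d) / (n + d)) atTop (𝓝 0) :=
    Tendsto.div_atTop tendsto_const_nhds
      (tendsto_atTop_add_const_right atTop d tendsto_natCast_atTop_atTop)
  have h1 : Tendsto (fun n : ℕ => (n + c) / (n + d)) atTop (𝓝 1) := by
    have h2 : Tendsto (fun n : ℕ => 1 + (c - d) / (n + d)) atTop (𝓝 1) := by
      simpa using tendsto_const_nhds.add h0
    apply h2.congr'
    filter_upwards [eventually_gt_atTop ⌈|d|⌉₊] with n hn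
    have hd : (0:ℝ) < n + d := by
      have h1 : |d| < (n:ℝ) :=
        lt_of_le_of_lt (Nat.le_ceil _) (by exact_mod_cast hn)
      linarith [neg_abs_le d]
    field_simp
    ring
  have h3 : Tendsto (fun n : ℕ => Real.log ((n + c) / (n + d))) atTop (𝓝 0) := by
    have := ((Real.continuousAt_log one_ne_zero).tendsto.comp h1)
    simpa [Function.comp_def] using this
  apply h3.congr'
  filter_upwards [eventually_gt_atTop (⌈|c|⌉₊ + ⌈|d|⌉₊)] with n hn
  have hcn : |c| ≤ (n:ℝ) := by
    have : ⌈|c|⌉₊ ≤ n := by omega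
    exact le_trans (Nat.le_ceil _) (by exact_mod_cast this)
  have hdn : |d| ≤ (n:ℝ) := by
    have : ⌈|d|⌉₊ ≤ n := by omega
    exact le_trans (Nat.le_ceil _) (by exact_mod_cast this)
  have hn0 : (0:ℝ) < n := by
    have : 0 < n := by omega
    exact_mod_cast this
  have hcn' : |c| < (n:ℝ) := by
    have : ⌈|c|⌉₊ < n := by omega
    exact lt_of_le_of_lt (Nat.le_ceil _) (by exact_mod_cast this)
  have hdn' : |d| < (n:ℝ) := by
    have : ⌈|d|⌉₊ < n := by omega
    exact lt_of_le_of_lt (Nat.le_ceil _) (by exact_mod_cast this)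
  have hc0 : (0:ℝ) < n + c := by linarith [neg_abs_le c]
  have hd0 : (0:ℝ) < n + d := by linarith [neg_abs_le d]
  rw [Real.log_div hc0.ne' hd0.ne']

private lemma tendsto_digamma_diff {a b : ℝ} (ha : 0 < a) (hb : 0 < b) :
    Tendsto (fun n : ℕ => ∑ m ∈ Finset.range n, (1 / (a + m) - 1 / (b + m)))
      atTop (𝓝 (digamma b - digamma a)) := by
  have key : ∀ n : ℕ, ∑ m ∈ Finset.range n, (1 / (a + m) - 1 / (b + m))
      = (digamma b - digamma a) + (digamma (a + n) - digamma (b + n)) := by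
    intro n
    have h1 := digamma_rec_nat ha n
    have h2 := digamma_rec_nat hb n
    rw [Finset.sum_sub_distrib]
    linarith
  have h0 : Tendsto (fun n : ℕ => digamma (a + n) - digamma (b + n)) atTop (𝓝 0) := by
    refine tendsto_of_tendsto_of_tendsto_of_le_of_le'
      (tendsto_log_add_sub_log_add (a - 1) b) (tendsto_log_add_sub_log_add a (b - 1)) ?_ ?_
    · filter_upwards [eventually_ge_atTop 1] with n hn
      have hn1 : (1:ℝ) ≤ n := by exact_mod_cast hn
      have l1 : Real.log (a + n - 1) ≤ digamma (a + n) := log_le_digamma (by linarith)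
      have l2 : digamma (b + n) ≤ Real.log (b + n) := digamma_le_log (by linarith)
      have e1 : (n:ℝ) + (a - 1) = a + n - 1 := by ring
      have e2 : (n:ℝ) + b = b + n := by ring
      rw [e1, e2]; linarith
    · filter_upwards [eventually_ge_atTop 1] with n hn
      have hn1 : (1:ℝ) ≤ n := by exact_mod_cast hn
      have l1 : digamma (a + n) ≤ Real.log (a + n) := digamma_le_log (by linarith)
      have l2 : Real.log (b + n - 1) ≤ digamma (b + n) := log_le_digamma (by linarith)
      have e1 : (n:ℝ) + a = a + n := by ring
      have e2 : (n:ℝ) + (b - 1) = b + n - 1 := by ring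
      rw [e1, e2]; linarith
  have h1 : Tendsto (fun n : ℕ => (digamma b - digamma a) + (digamma (a + n) - digamma (b + n)))
      atTop (𝓝 ((digamma b - digamma a) + 0)) := tendsto_const_nhds.add h0
  rw [add_zero] at h1
  exact h1.congr (fun n => (key n).symm)

private lemma hs2 : Real.sqrt 2 ^ 2 = 2 := Real.sq_sqrt (by norm_num)

private noncomputable def FF (y : ℝ) : ℝ :=
  Real.sqrt 2 * (Real.log (y^2 - Real.sqrt 2 * y + 1) - Real.log (y^2 + Real.sqrt 2 * y + 1)) +
    2 * Real.sqrt 2 * (Real.arctan (Real.sqrt 2 * y + 1) + Real.arctan (Real.sqrt 2 * y - 1))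

private lemma hasDerivAt_FF (x : ℝ) : HasDerivAt FF (8 * x^2 / (1 + x^4)) x := by
  set s := Real.sqrt 2 with hs
  have h2 : s ^ 2 = 2 := hs2
  have hu0 : 0 < x^2 - s*x + 1 := by nlinarith [sq_nonneg (2*x - s)]
  have hv0 : 0 < x^2 + s*x + 1 := by nlinarith [sq_nonneg (2*x + s)]
  have hd0 : (0:ℝ) < 1 + x^4 := by positivity
  have hx2 : HasDerivAt (fun y : ℝ => y^2) (2*x) x := by
    simpa using hasDerivAt_pow 2 x
  have hg : HasDerivAt (fun y : ℝ => s*y) s x := by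
    simpa using (hasDerivAt_id x).const_mul s
  have hu : HasDerivAt (fun y : ℝ => y^2 - s*y + 1) (2*x - s) x := by
    simpa using (hx2.sub hg).add_const 1
  have hv : HasDerivAt (fun y : ℝ => y^2 + s*y + 1) (2*x + s) x := by
    simpa using (hx2.add hg).add_const 1
  have hlin1 : HasDerivAt (fun y : ℝ => s*y + 1) s x := by
    simpa using ((hasDerivAt_id x).const_mul s).add_const 1
  have hlin2 : HasDerivAt (fun y : ℝ => s*y - 1) s x := by
    simpa using ((hasDerivAt_id x).const_mul s).sub_const 1
  have hA : HasDerivAt (fun y : ℝ => Real.arctan (s*y + 1)) (1/(1+(s*x+1)^2) * s) x :=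
    by have := (Real.hasDerivAt_arctan (s*x+1)).comp x hlin1; exact this
  have hB : HasDerivAt (fun y : ℝ => Real.arctan (s*y - 1)) (1/(1+(s*x-1)^2) * s) x :=
    by have := (Real.hasDerivAt_arctan (s*x-1)).comp x hlin2; exact this
  have hL : HasDerivAt (fun y : ℝ => Real.log (y^2 - s*y + 1))
      ((2*x-s)/(x^2 - s*x + 1)) x := hu.log hu0.ne'
  have hM : HasDerivAt (fun y : ℝ => Real.log (y^2 + s*y + 1))
      ((2*x+s)/(x^2 + s*x + 1)) x := hv.log hv0.ne'
  have htot := ((hL.sub hM).const_mul s).add ((hA.add hB).const_mul (2*s))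
  refine htot.congr_deriv ?_
  -- algebraic identity
  have hw1 : 1 + (s*x+1)^2 = 2*(x^2 + s*x + 1) := by linear_combination x^2 * h2
  have hw2 : 1 + (s*x-1)^2 = 2*(x^2 - s*x + 1) := by linear_combination x^2 * h2
  have huv : (x^2 - s*x + 1)*(x^2 + s*x + 1) = 1 + x^4 := by linear_combination (-(x^2)) * h2
  have h1 : (2*x-s)/(x^2 - s*x + 1) - (2*x+s)/(x^2 + s*x + 1) = 2*s*(x^2-1)/(1+x^4) := by
    rw [div_sub_div _ _ hu0.ne' hv0.ne', huv]
    congr 1; ring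
  have hmul : (1 + (s*x+1)^2) * (1 + (s*x-1)^2) = 4*(1+x^4) := by
    rw [hw1, hw2]; linear_combination 4 * huv
  have h2' : 1/(1+(s*x+1)^2) * s + 1/(1+(s*x-1)^2) * s = s*(x^2+1)/(1+x^4) := by
    rw [one_div, one_div, inv_mul_eq_div, inv_mul_eq_div,
      div_add_div _ _ (by positivity) (by positivity), hmul]
    rw [div_eq_div_iff (by positivity) hd0.ne']
    linear_combination (2*s*x^2 + 2*s*x^6) * h2
  rw [h1, h2']
  field_simp
  linear_combination (4*x^2) * h2

private lemma sqrt2_pos : (0:ℝ) < Real.sqrt 2 := Real.sqrt_pos.mpr (by norm_num)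
private lemma sqrt2_lt_two : Real.sqrt 2 < 2 := by
  nlinarith [hs2, sqrt2_pos]

private lemma integral_L : ∫ x in (0:ℝ)..1, 8 * x^2 / (1 + x^4)
    = Real.sqrt 2 * (Real.pi - 2 * Real.log (Real.sqrt 2 + 1)) := by
  have hcont : Continuous (fun x : ℝ => 8 * x^2 / (1 + x^4)) := by
    apply Continuous.div (by continuity) (by continuity)
    intro x; positivity
  rw [intervalIntegral.integral_eq_sub_of_hasDerivAt (fun x _ => hasDerivAt_FF x)
    (hcont.intervalIntegrable 0 1)]
  set s := Real.sqrt 2 with hs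
  have h2 : s^2 = 2 := hs2
  have hs0 : 0 < s := sqrt2_pos
  have hs2' : s < 2 := sqrt2_lt_two
  have hFF0 : FF 0 = 0 := by
    simp [FF, Real.arctan_neg]
  have harct : Real.arctan (s + 1) + Real.arctan (s - 1) = Real.pi / 2 := by
    have hinv : (s + 1)⁻¹ = s - 1 := by
      have hmul : (s + 1) * (s - 1) = 1 := by linear_combination h2
      field_simp
      linear_combination -h2
    have := Real.arctan_inv_of_pos (by linarith : (0:ℝ) < s + 1)
    rw [hinv] at this
    rw [this]; ring
  have hlog : Real.log (1^2 - s*1 + 1) - Real.log (1^2 + s*1 + 1) = -(2 * Real.log (s + 1)) := by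
    have he : (1:ℝ)^2 + s*1 + 1 = (1^2 - s*1 + 1) * (s+1)^2 := by linear_combination s*h2
    rw [he, Real.log_mul (by nlinarith) (by positivity), Real.log_pow]
    push_cast
    ring
  have hFF1 : FF 1 = s * (Real.pi - 2 * Real.log (s + 1)) := by
    rw [FF, hlog]
    rw [show s * (1:ℝ) + 1 = s + 1 by ring, show s * (1:ℝ) - 1 = s - 1 by ring, harct]
    ring
  rw [hFF1, hFF0, sub_zero]

private lemma geom_identity (x : ℝ) (n : ℕ) :
    (∑ m ∈ Finset.range n, (8*x^(8*m+2) - 8*x^(8*m+6))) * (1 + x^4)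
      = 8*x^2 - 8*x^(8*n+2) := by
  induction n with
  | zero => simp
  | succ n ih =>
    rw [Finset.sum_range_succ, add_mul, ih]
    ring

private lemma term_integral (m : ℕ) :
    ∫ x in (0:ℝ)..1, (8*x^(8*m+2) - 8*x^(8*m+6))
      = 1/(3/8 + (m:ℝ)) - 1/(7/8 + (m:ℝ)) := by
  rw [intervalIntegral.integral_sub, intervalIntegral.integral_const_mul,
    intervalIntegral.integral_const_mul, integral_pow, integral_pow]
  · push_cast
    rw [one_pow, one_pow]
    have h1 : (3:ℝ)/8 + m > 0 := by positivity
    have h2 : (7:ℝ)/8 + m > 0 := by positivity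
    have h3 : (8:ℝ)*m + 2 + 1 > 0 := by positivity
    have h4 : (8:ℝ)*m + 6 + 1 > 0 := by positivity
    rw [zero_pow (by positivity), zero_pow (by positivity)]
    field_simp
    ring
  · exact (Continuous.intervalIntegrable (by continuity) 0 1)
  · exact (Continuous.intervalIntegrable (by continuity) 0 1)

private lemma sum_eq_integral (n : ℕ) :
    ∑ m ∈ Finset.range n, (1/(3/8 + (m:ℝ)) - 1/(7/8 + (m:ℝ)))
      = (∫ x in (0:ℝ)..1, 8*x^2/(1+x^4)) - ∫ x in (0:ℝ)..1, 8*x^(8*n+2)/(1+x^4) := by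
  have h1 : ∀ m ∈ Finset.range n, (1/(3/8 + (m:ℝ)) - 1/(7/8 + (m:ℝ)))
      = ∫ x in (0:ℝ)..1, (8*x^(8*m+2) - 8*x^(8*m+6)) := fun m _ => (term_integral m).symm
  rw [Finset.sum_congr rfl h1, ← intervalIntegral.integral_finset_sum
    (fun m _ => Continuous.intervalIntegrable (by continuity) 0 1)]
  rw [← intervalIntegral.integral_sub]
  · apply intervalIntegral.integral_congr
    intro x _
    have hd : (0:ℝ) < 1 + x^4 := by positivity
    simp only []
    rw [div_sub_div_same, eq_div_iff hd.ne']
    exact geom_identity x n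
  · apply Continuous.intervalIntegrable
    apply Continuous.div (by continuity) (by continuity)
    intro x; positivity
  · apply Continuous.intervalIntegrable
    apply Continuous.div (by continuity) (by continuity)
    intro x; positivity

private lemma tail_tendsto :
    Tendsto (fun n : ℕ => ∫ x in (0:ℝ)..1, 8*x^(8*n+2)/(1+x^4)) atTop (𝓝 0) := by
  have hup : ∀ n : ℕ, (∫ x in (0:ℝ)..1, 8*x^(8*n+2)/(1+x^4)) ≤ 8/(8*(n:ℝ)+3) := by
    intro n
    have hle : (∫ x in (0:ℝ)..1, 8*x^(8*n+2)/(1+x^4)) ≤ ∫ x in (0:ℝ)..1, 8*x^(8*n+2) := by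
      apply intervalIntegral.integral_mono_on (by norm_num)
      · apply Continuous.intervalIntegrable
        apply Continuous.div (by continuity) (by continuity)
        intro x; positivity
      · exact Continuous.intervalIntegrable (by continuity) 0 1
      · intro x hx
        rcases hx with ⟨hx0, hx1⟩
        have hd : (1:ℝ) ≤ 1 + x^4 := by nlinarith [pow_nonneg hx0 4]
        have hnum : (0:ℝ) ≤ 8*x^(8*n+2) := by positivity
        calc 8*x^(8*n+2)/(1+x^4) ≤ 8*x^(8*n+2)/1 := by
              apply div_le_div_of_nonneg_left hnum (by norm_num) hd
          _ = 8*x^(8*n+2) := by rw [div_one]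
    refine hle.trans (le_of_eq ?_)
    rw [intervalIntegral.integral_const_mul, integral_pow]
    rw [one_pow, zero_pow (by positivity)]
    push_cast
    field_simp
    ring
  have hlo : ∀ n : ℕ, 0 ≤ ∫ x in (0:ℝ)..1, 8*x^(8*n+2)/(1+x^4) := by
    intro n
    apply intervalIntegral.integral_nonneg (by norm_num)
    intro x hx
    have : (0:ℝ) ≤ x := hx.1
    positivity
  have hz : Tendsto (fun n : ℕ => 8/(8*(n:ℝ)+3)) atTop (𝓝 0) := by
    apply Tendsto.div_atTop tendsto_const_nhds
    apply tendsto_atTop_add_const_right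
    exact (tendsto_natCast_atTop_atTop (R := ℝ)).const_mul_atTop (by norm_num)
  exact tendsto_of_tendsto_of_tendsto_of_le_of_le tendsto_const_nhds hz hlo hup

private lemma tendsto_sum_to_L :
    Tendsto (fun n : ℕ => ∑ m ∈ Finset.range n, (1/(3/8 + (m:ℝ)) - 1/(7/8 + (m:ℝ))))
      atTop (𝓝 (Real.sqrt 2 * (Real.pi - 2 * Real.log (Real.sqrt 2 + 1)))) := by
  rw [← integral_L]
  have h := (tendsto_const_nhds (x := ∫ x in (0:ℝ)..1, 8*x^2/(1+x^4))
    (f := atTop (α := ℕ))).sub tail_tendsto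
  rw [sub_zero] at h
  exact h.congr (fun n => (sum_eq_integral n).symm)


/-- `ψ(7/8) - ψ(3/8) = √2 (π - 2 log(√2 + 1))`. -/
theorem digamma_seven_eighths_sub_three_eighths :
    digamma (7 / 8) - digamma (3 / 8) =
      Real.sqrt 2 * (Real.pi - 2 * Real.log (Real.sqrt 2 + 1)) := by
  have h1 := tendsto_digamma_diff (a := 3/8) (b := 7/8) (by norm_num) (by norm_num)
  exact tendsto_nhds_unique h1 tendsto_sum_to_L
end

section
/- For all real v, arctan(v/2) = arctan(v) - arctan(v/(v²+2)) and arctan(v) = 2 arctan(v/2) - arctan(v³/(3v²+4)). -/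
/-- Arctangent identities: for every real `v`,
`arctan(v/2) = arctan v - arctan(v/(v²+2))` and
`arctan v = 2 arctan(v/2) - arctan(v³/(3v²+4))`. -/
theorem arctan_identities (v : ℝ) :
    Real.arctan (v / 2) = Real.arctan v - Real.arctan (v / (v ^ 2 + 2)) ∧
    Real.arctan v = 2 * Real.arctan (v / 2) - Real.arctan (v ^ 3 / (3 * v ^ 2 + 4)) := by
  have h2 : (0:ℝ) < v ^ 2 + 2 := by positivity
  have h3 : (0:ℝ) < 3 * v ^ 2 + 4 := by positivity
  have n1 : (1:ℝ) - v / 2 * (v / (v ^ 2 + 2)) ≠ 0 := by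
    rw [div_mul_div_comm, sub_ne_zero]
    intro h
    have := (div_eq_one_iff_eq (by positivity : (2*(v^2+2):ℝ) ≠ 0)).mp h.symm
    nlinarith
  have n2 : (1:ℝ) - v ^ 3 / (3 * v ^ 2 + 4) * (v / (v ^ 2 + 2)) ≠ 0 := by
    rw [div_mul_div_comm, sub_ne_zero]
    intro h
    have := (div_eq_one_iff_eq (by positivity : ((3*v^2+4)*(v^2+2):ℝ) ≠ 0)).mp h.symm
    nlinarith
  have h1 : Real.arctan (v / 2) + Real.arctan (v / (v ^ 2 + 2)) = Real.arctan v := by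
    rw [Real.arctan_add (by rw [div_mul_div_comm, div_lt_one (by positivity)]; nlinarith)]
    congr 1
    rw [div_eq_iff n1]
    field_simp
    ring
  have h4 : Real.arctan (v ^ 3 / (3 * v ^ 2 + 4)) + Real.arctan (v / (v ^ 2 + 2))
      = Real.arctan (v / 2) := by
    rw [Real.arctan_add (by rw [div_mul_div_comm, div_lt_one (by positivity)]; nlinarith)]
    congr 1
    rw [div_eq_iff n2]
    field_simp
    ring
  constructor <;> linarith
end

section
/- The alternating sum ∑_{j=0}^∞ (-1)^j log(j+1)/(j+1) converges and equals log(2)·(log(2) - 2γ)/2, where γ is the Euler–Mascheroni constant. -/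
open Filter

open Real Finset in
private noncomputable def gg (j : ℕ) : ℝ := Real.log ((j:ℝ)+1) / ((j:ℝ)+1)
private noncomputable def SS (n : ℕ) : ℝ := ∑ j ∈ Finset.range n, (-1:ℝ)^j * gg j
private noncomputable def LL (n : ℕ) : ℝ := ∑ j ∈ Finset.range n, gg j
private noncomputable def HH (n : ℕ) : ℝ := ∑ j ∈ Finset.range n, (1:ℝ)/((j:ℝ)+1)

section Aux
open Real Finset

private lemma step_ident (N : ℕ) : (-1:ℝ)^(2*N) * gg (2*N) + (-1:ℝ)^(2*N+1) * gg (2*N+1)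
    = gg (2*N) + gg (2*N+1) - gg N - Real.log 2 * (1/((N:ℝ)+1)) := by
  have e1 : (-1:ℝ)^(2*N) = 1 := by rw [pow_mul]; norm_num
  have e2 : (-1:ℝ)^(2*N+1) = -1 := by rw [pow_add, e1]; norm_num
  have hg : gg (2*N+1) = (Real.log 2 + Real.log ((N:ℝ)+1)) / (2*((N:ℝ)+1)) := by
    rw [gg]
    push_cast
    rw [show (2*(N:ℝ)+1)+1 = 2*((N:ℝ)+1) by ring,
      Real.log_mul two_ne_zero (by positivity)]
  have hgN : gg N = Real.log ((N:ℝ)+1) / ((N:ℝ)+1) := rfl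
  rw [e1, e2, hg, hgN]
  have hN1 : (0:ℝ) < (N:ℝ)+1 := by positivity
  field_simp
  ring

private lemma key_ident (N : ℕ) : SS (2*N) = LL (2*N) - LL N - Real.log 2 * HH N := by
  induction N with
  | zero => simp [SS, LL, HH]
  | succ N ih =>
    have h2 : 2*(N+1) = 2*N+1+1 := by ring
    have := step_ident N
    simp only [h2, SS, LL, HH, Finset.sum_range_succ] at *
    linarith

private lemma integ_eval (N : ℕ) (hN : 1 ≤ N) :
    ∫ x in (N:ℝ)..((N:ℝ) + (N:ℕ)), Real.log x / x
      = Real.log 2 * Real.log N + (Real.log 2)^2/2 := by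
  have h1 : (1:ℝ) ≤ (N:ℝ) := by exact_mod_cast hN
  have hle : (N:ℝ) ≤ (N:ℝ) + (N:ℕ) := by
    have : (0:ℝ) ≤ (N:ℕ) := Nat.cast_nonneg N; linarith
  have hsub : Set.uIcc (N:ℝ) ((N:ℝ)+(N:ℕ)) ⊆ {x : ℝ | x ≠ 0} := by
    rw [Set.uIcc_of_le hle]
    intro x hx
    have := hx.1
    simp only [Set.mem_setOf_eq]
    nlinarith
  have hcont : ContinuousOn (fun x : ℝ => Real.log x / x) (Set.uIcc (N:ℝ) ((N:ℝ)+(N:ℕ))) :=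
    (Real.continuousOn_log.mono hsub).div (continuousOn_id.mono hsub) (fun x hx => hsub hx)
  have heval : ∫ x in (N:ℝ)..((N:ℝ) + (N:ℕ)), Real.log x / x
      = (Real.log ((N:ℝ)+(N:ℕ)))^2/2 - (Real.log N)^2/2 := by
    apply intervalIntegral.integral_eq_sub_of_hasDerivAt (f := fun x : ℝ => Real.log x ^ 2 / 2)
    · intro x hx
      rw [Set.uIcc_of_le hle] at hx
      have hx0 : x ≠ 0 := by have := hx.1; intro h; rw [h] at this; linarith
      have := ((Real.hasDerivAt_log hx0).pow 2).div_const 2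
      convert this using 1
      · rfl
      · rfl
      · rw [Nat.cast_ofNat, show (2:ℕ)-1 = 1 from rfl, pow_one]
        ring
    · exact hcont.intervalIntegrable
  rw [heval, show (N:ℝ) + (N:ℕ) = 2*(N:ℝ) by ring,
    Real.log_mul two_ne_zero (by positivity)]
  ring

private lemma anti_on (N : ℕ) (hN : 3 ≤ N) :
    AntitoneOn (fun x : ℝ => Real.log x / x) (Set.Icc (N:ℝ) ((N:ℝ) + (N:ℕ))) := by
  apply Real.log_div_self_antitoneOn.mono
  intro x hx
  have h3 : (3:ℝ) ≤ (N:ℝ) := by exact_mod_cast hN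
  have := Real.exp_one_lt_d9
  simp only [Set.mem_Ici]
  have := hx.1
  nlinarith

private lemma TT_eq (N : ℕ) :
    (∑ i ∈ Finset.range N, (fun x : ℝ => Real.log x / x) ((N:ℝ) + ((i+1:ℕ):ℝ)))
      = LL (2*N) - LL N := by
  rw [LL, LL, ← Finset.sum_Ico_eq_sub _ (by omega : N ≤ 2*N),
    Finset.sum_Ico_eq_sum_range]
  have h : 2*N - N = N := by omega
  rw [h]
  apply Finset.sum_congr rfl
  intro i _
  simp only [gg]
  push_cast
  ring_nf

private lemma D_bounds (N : ℕ) (hN : 3 ≤ N) :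
    0 ≤ (∫ x in (N:ℝ)..((N:ℝ) + (N:ℕ)), Real.log x / x)
        - (∑ i ∈ Finset.range N, (fun x : ℝ => Real.log x / x) ((N:ℝ) + ((i+1:ℕ):ℝ))) ∧
    (∫ x in (N:ℝ)..((N:ℝ) + (N:ℕ)), Real.log x / x)
        - (∑ i ∈ Finset.range N, (fun x : ℝ => Real.log x / x) ((N:ℝ) + ((i+1:ℕ):ℝ)))
      ≤ Real.log N / N := by
  have hanti := anti_on N hN
  have hlb := hanti.sum_le_integral
  have hub := hanti.integral_le_sum
  have htel : (∑ i ∈ Finset.range N, (fun x : ℝ => Real.log x / x) ((N:ℝ) + (i:ℕ)))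
      - (∑ i ∈ Finset.range N, (fun x : ℝ => Real.log x / x) ((N:ℝ) + ((i+1:ℕ):ℝ)))
      = Real.log ((N:ℝ)) / N - Real.log ((N:ℝ)+(N:ℕ)) / ((N:ℝ)+(N:ℕ)) := by
    rw [← Finset.sum_sub_distrib]
    have := Finset.sum_range_sub' (f := fun i : ℕ => Real.log ((N:ℝ)+(i:ℕ)) / ((N:ℝ)+(i:ℕ))) N
    simp only at this ⊢
    push_cast at this ⊢
    convert this using 2 <;> norm_num
  have hpos : 0 ≤ Real.log ((N:ℝ)+(N:ℕ)) / ((N:ℝ)+(N:ℕ)) := by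
    have h1 : (1:ℝ) ≤ (N:ℝ)+(N:ℕ) := by
      have h3 : (3:ℝ) ≤ (N:ℝ) := by exact_mod_cast hN
      have h0 : (0:ℝ) ≤ (N:ℕ) := Nat.cast_nonneg N
      linarith
    exact div_nonneg (Real.log_nonneg h1) (by linarith)
  exact ⟨by linarith, by linarith⟩

private lemma hlog0 : Tendsto (fun N : ℕ => Real.log N / N) atTop (nhds 0) := by
  have h := Real.isLittleO_log_id_atTop.tendsto_div_nhds_zero
  exact h.comp tendsto_natCast_atTop_atTop

private lemma hHH :
    Tendsto (fun n : ℕ => HH n - Real.log n) atTop (nhds Real.eulerMascheroniConstant) := by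
  have h := Real.tendsto_harmonic_sub_log
  apply h.congr
  intro n
  congr 1
  rw [HH, harmonic]
  push_cast
  simp [one_div]

private lemma hanti_tail : Antitone (fun i : ℕ => gg (i+2)) := by
  intro a b hab
  have hmem : ∀ c : ℕ, ((c:ℝ)+2+1) ∈ {x : ℝ | Real.exp 1 ≤ x} := by
    intro c
    have := Real.exp_one_lt_d9
    simp only [Set.mem_setOf_eq]
    nlinarith [Nat.cast_nonneg (α := ℝ) c]
  have hgc : ∀ c : ℕ, gg (c+2) = (fun x : ℝ => Real.log x / x) ((c:ℝ)+2+1) := by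
    intro c; simp only [gg]; push_cast; ring_nf
  show gg (b+2) ≤ gg (a+2)
  rw [hgc, hgc]
  apply Real.log_div_self_antitoneOn (hmem a) (hmem b)
  have : (a:ℝ) ≤ b := by exact_mod_cast hab
  linarith

private lemma hzero_tail : Tendsto (fun i : ℕ => gg (i+2)) atTop (nhds 0) := by
  have h := Real.isLittleO_log_id_atTop.tendsto_div_nhds_zero
  have h2 : Tendsto (fun i : ℕ => (i:ℝ)+2+1) atTop atTop :=
    tendsto_atTop_add_const_right _ 1
      (tendsto_atTop_add_const_right _ 2 tendsto_natCast_atTop_atTop)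
  apply (h.comp h2).congr
  intro i
  simp only [Function.comp, gg, id]
  push_cast
  ring_nf

private lemma SS_shift (n : ℕ) :
    SS (n+2) = (∑ i ∈ Finset.range n, (-1:ℝ)^i * gg (i+2)) + SS 2 := by
  induction n with
  | zero => simp
  | succ n ih =>
    have h : n+1+2 = (n+2)+1 := by ring
    rw [h, SS, Finset.sum_range_succ, ← SS, ih, Finset.sum_range_succ]
    have : (-1:ℝ)^(n+2) = (-1:ℝ)^n := by rw [pow_add]; norm_num
    rw [this]
    ring

private lemma SS_exists_lim : ∃ l, Tendsto SS atTop (nhds l) := by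
  obtain ⟨l, hl⟩ := hanti_tail.tendsto_alternating_series_of_tendsto_zero hzero_tail
  refine ⟨l + SS 2, ?_⟩
  rw [← tendsto_add_atTop_iff_nat 2]
  exact (hl.add_const (SS 2)).congr (fun n => (SS_shift n).symm)

private lemma hEven : Tendsto (fun N => SS (2*N)) atTop
    (nhds (Real.log 2 * (Real.log 2 - 2 * Real.eulerMascheroniConstant) / 2)) := by
  set D : ℕ → ℝ := fun N => (∫ x in (N:ℝ)..((N:ℝ) + (N:ℕ)), Real.log x / x)
      - (∑ i ∈ Finset.range N, (fun x : ℝ => Real.log x / x) ((N:ℝ) + ((i+1:ℕ):ℝ))) with hD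
  have hDlim : Tendsto D atTop (nhds 0) := by
    apply tendsto_of_tendsto_of_tendsto_of_le_of_le' tendsto_const_nhds hlog0
    · filter_upwards [eventually_ge_atTop 3] with N hN
      exact (D_bounds N hN).1
    · filter_upwards [eventually_ge_atTop 3] with N hN
      exact (D_bounds N hN).2
  have hmain : Tendsto (fun N : ℕ => -(D N) - Real.log 2 * (HH N - Real.log N)
        + (Real.log 2)^2/2) atTop
      (nhds (-(0:ℝ) - Real.log 2 * Real.eulerMascheroniConstant + (Real.log 2)^2/2)) :=
    ((hDlim.neg).sub (hHH.const_mul (Real.log 2))).add_const _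
  have hval : -(0:ℝ) - Real.log 2 * Real.eulerMascheroniConstant + (Real.log 2)^2/2
      = Real.log 2 * (Real.log 2 - 2 * Real.eulerMascheroniConstant) / 2 := by ring
  rw [← hval]
  apply hmain.congr'
  filter_upwards [eventually_ge_atTop 1] with N hN
  rw [key_ident N, ← TT_eq N]
  simp only [hD]
  rw [integ_eval N hN]
  ring

/-- `∑_{j=0}^∞ (-1)^j log(j+1)/(j+1)` converges (as a limit of partial sums) and
equals `log 2 (log 2 - 2γ)/2`, where `γ` is the Euler–Mascheroni constant. -/
theorem alternating_log_sum :
    Tendsto (fun N => ∑ j ∈ Finset.range N,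
        (-1 : ℝ) ^ j * Real.log ((j : ℝ) + 1) / ((j : ℝ) + 1)) atTop
      (nhds (Real.log 2 * (Real.log 2 - 2 * Real.eulerMascheroniConstant) / 2)) := by
  obtain ⟨l, hl⟩ := SS_exists_lim
  have h2N : Tendsto (fun N : ℕ => 2*N) atTop atTop := by
    apply Filter.tendsto_atTop_atTop.mpr
    exact fun b => ⟨b, fun a ha => by omega⟩
  have heq : l = Real.log 2 * (Real.log 2 - 2 * Real.eulerMascheroniConstant) / 2 :=
    tendsto_nhds_unique (hl.comp h2N) hEven
  rw [← heq]
  apply hl.congr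
  intro n
  simp only [SS, gg, mul_div_assoc]

end Aux
end
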